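/- arXiv:1904.13343 — 10 statements merged into one kernel-verified Lean document; each statement's English description precedes it below -/
import Mathlib

section
/- Let (X, 𝒜, μ) be a probability space and S : X → X a measure-preserving map that is ergodic with respect to μ. Then for every integer N ≥ 1 there exist an integer k with 1 ≤ k ≤ N and measurable sets A_1, …, A_k ⊆ X such that: (1) μ(A_i ∩ A_j) = 0 for i ≠ j and μ(A_1 ∪ … ∪ A_k) = 1; (2) μ(A_j) ≥ 1/N for each j; and (3) for each j the restricted measure μ|_{A_j} is invariant under the N-th iterate S^N and S^N is ergodic with respect to μ|_{A_j}. -/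
open MeasureTheory Filter Set
open scoped ENNReal NNReal

/-- Decomposition of an ergodic measure-preserving map into the ergodic
components of its `N`-th power. -/
theorem ergodic_decomposition_of_pow
    {X : Type*} [MeasurableSpace X] (μ : Measure X) [IsProbabilityMeasure μ]
    (S : X → X) (hS : Ergodic S μ) (N : ℕ) (hN : 1 ≤ N) :
    ∃ k, 1 ≤ k ∧ k ≤ N ∧ ∃ A : Fin k → Set X,
      (∀ j, MeasurableSet (A j)) ∧
      (∀ i j, i ≠ j → μ (A i ∩ A j) = 0) ∧
      μ (⋃ j, A j) = 1 ∧
      (∀ j, 1 / (N : ℝ≥0∞) ≤ μ (A j)) ∧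
      (∀ j, Ergodic (S^[N]) (μ.restrict (A j))) := by
  classical
  have hSm : Measurable S := hS.measurable
  have hMP : ∀ n : ℕ, MeasurePreserving (S^[n]) μ μ := fun n => hS.toMeasurePreserving.iterate n
  set T : X → X := S^[N] with hTdef
  have hT : MeasurePreserving T μ μ := hMP N
  -- invariance under T, up to null sets
  set Inv : Set X → Prop := fun B => T ⁻¹' B =ᵐ[μ] B with hInvdef
  -- pulling back a.e.-equalities of sets along iterates
  have pull : ∀ (n : ℕ) {B C : Set X}, B =ᵐ[μ] C → (S^[n]) ⁻¹' B =ᵐ[μ] (S^[n]) ⁻¹' C :=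
    fun n B C h => (hMP n).quasiMeasurePreserving.preimage_ae_eq h
  -- pushing forward a.e.-equalities of measurable sets along iterates
  have push : ∀ (n : ℕ) {B C : Set X}, MeasurableSet B → MeasurableSet C →
      (S^[n]) ⁻¹' B =ᵐ[μ] (S^[n]) ⁻¹' C → B =ᵐ[μ] C := by
    intro n B C hB hC h
    rw [ae_eq_set] at h ⊢
    constructor
    · have := (hMP n).measure_preimage (hB.diff hC).nullMeasurableSet
      rw [preimage_diff] at this
      rw [← this]; exact h.1
    · have := (hMP n).measure_preimage (hC.diff hB).nullMeasurableSet
      rw [preimage_diff] at this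
      rw [← this]; exact h.2
  -- invariance of iterated preimages
  have InvPre : ∀ (j : ℕ) {B : Set X}, Inv B → Inv ((S^[j]) ⁻¹' B) := by
    intro j B hB
    have hcomm : T ⁻¹' ((S^[j]) ⁻¹' B) = (S^[j]) ⁻¹' (T ⁻¹' B) := by
      rw [hTdef, ← Set.preimage_comp, ← Set.preimage_comp, ← Function.iterate_add,
        ← Function.iterate_add, add_comm]
    rw [hInvdef] at hB ⊢
    simp only at hB ⊢
    rw [hcomm]
    exact pull j hB
  -- a positive-measure invariant set sweeps out everything in N steps
  have full : ∀ B : Set X, MeasurableSet B → Inv B → 0 < μ B →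
      μ (⋃ i : Fin N, (S^[(i : ℕ)]) ⁻¹' B) = 1 := by
    intro B hBm hBi hB0
    set U := ⋃ i : Fin N, (S^[(i : ℕ)]) ⁻¹' B with hU
    have hUm : MeasurableSet U := MeasurableSet.iUnion fun i => (hSm.iterate _) hBm
    have hBU : B ⊆ U := by
      intro x hx
      rw [hU, mem_iUnion]
      exact ⟨⟨0, hN⟩, by simpa using hx⟩
    have hdiff1 : μ (T ⁻¹' B \ B) = 0 := (ae_eq_set.mp hBi).1
    have hdiff2 : μ (B \ T ⁻¹' B) = 0 := (ae_eq_set.mp hBi).2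
    have key : S ⁻¹' U =ᵐ[μ] U := by
      rw [ae_eq_set]
      constructor
      · refine measure_mono_null ?_ hdiff1
        rintro x ⟨hx1, hx2⟩
        rw [mem_preimage, hU, mem_iUnion] at hx1
        obtain ⟨i, hi⟩ := hx1
        have hx' : x ∈ (S^[(i : ℕ) + 1]) ⁻¹' B := by
          rw [mem_preimage, Function.iterate_succ_apply]
          exact hi
        rcases lt_or_eq_of_le (Nat.succ_le_of_lt i.isLt) with h | h
        · exact absurd (mem_iUnion.mpr ⟨⟨(i : ℕ) + 1, h⟩, hx'⟩) hx2
        · constructor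
          · rw [hTdef, ← h]; exact hx'
          · exact fun hxB => hx2 (hBU hxB)
      · refine measure_mono_null ?_ hdiff2
        rintro x ⟨hx1, hx2⟩
        rw [hU, mem_iUnion] at hx1
        obtain ⟨i, hi⟩ := hx1
        have hi0 : (i : ℕ) = 0 := by
          by_contra h
          obtain ⟨j, hj⟩ := Nat.exists_eq_succ_of_ne_zero h
          apply hx2
          rw [mem_preimage, hU, mem_iUnion]
          refine ⟨⟨j, lt_of_le_of_lt (Nat.le_succ j) (hj ▸ i.isLt)⟩, ?_⟩
          rw [mem_preimage, ← Function.iterate_succ_apply, ← hj]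
          exact hi
        constructor
        · rw [hi0] at hi; simpa using hi
        · intro hxT
          apply hx2
          rw [mem_preimage, hU, mem_iUnion]
          obtain ⟨M, hM⟩ := Nat.exists_eq_succ_of_ne_zero (Nat.one_le_iff_ne_zero.mp hN)
          refine ⟨⟨M, by omega⟩, ?_⟩
          rw [mem_preimage, ← Function.iterate_succ_apply, ← hM]
          exact hxT
    rcases hS.quasiErgodic.ae_empty_or_univ₀ hUm.nullMeasurableSet key with h | h
    · exfalso
      have h0 : μ U = 0 := ae_eq_empty.mp h
      exact absurd (lt_of_lt_of_le hB0 (measure_mono hBU)) (by rw [h0]; exact lt_irrefl 0)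
    · rw [measure_congr h, measure_univ]
  -- lower bound for positive invariant sets
  have lb : ∀ B : Set X, MeasurableSet B → Inv B → 0 < μ B → 1 / (N : ℝ≥0∞) ≤ μ B := by
    intro B hBm hBi hB0
    have h1 := full B hBm hBi hB0
    have h2 : μ (⋃ i : Fin N, (S^[(i : ℕ)]) ⁻¹' B) ≤ ∑ i : Fin N, μ ((S^[(i : ℕ)]) ⁻¹' B) :=
      measure_iUnion_fintype_le μ _
    have h3 : ∀ i : Fin N, μ ((S^[(i : ℕ)]) ⁻¹' B) = μ B := fun i =>
      (hMP _).measure_preimage hBm.nullMeasurableSet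
    have h4 : (1 : ℝ≥0∞) ≤ (N : ℝ≥0∞) * μ B := by
      calc (1 : ℝ≥0∞) = μ (⋃ i : Fin N, (S^[(i : ℕ)]) ⁻¹' B) := h1.symm
        _ ≤ ∑ i : Fin N, μ ((S^[(i : ℕ)]) ⁻¹' B) := h2
        _ = (N : ℝ≥0∞) * μ B := by
            simp [h3, Finset.sum_const, Finset.card_univ]
    rw [ENNReal.div_le_iff (by exact_mod_cast Nat.one_le_iff_ne_zero.mp hN)
      (ENNReal.natCast_ne_top N)]
    rwa [mul_comm] at h4
  -- the minimal measure of a positive invariant set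
  set 𝒮 : Set ℝ≥0∞ := {r | ∃ B : Set X, MeasurableSet B ∧ Inv B ∧ 0 < μ B ∧ μ B = r} with h𝒮
  set m : ℝ≥0∞ := sInf 𝒮 with hm
  have hm_le : ∀ {B : Set X}, MeasurableSet B → Inv B → 0 < μ B → m ≤ μ B :=
    fun {B} hB hI h0 => sInf_le ⟨B, hB, hI, h0, rfl⟩
  have hm_lb : 1 / (N : ℝ≥0∞) ≤ m := by
    apply le_sInf
    rintro r ⟨B, hB, hI, h0, rfl⟩
    exact lb B hB hI h0
  have hNinv_pos : (0 : ℝ≥0∞) < 1 / (N : ℝ≥0∞) :=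
    ENNReal.div_pos one_ne_zero (ENNReal.natCast_ne_top N)
  have hm0 : 0 < m := lt_of_lt_of_le hNinv_pos hm_lb
  have hInvUniv : Inv (univ : Set X) := by rw [hInvdef]; simp
  have hm1 : m ≤ 1 := by
    have := hm_le MeasurableSet.univ hInvUniv (by simp)
    simpa using this
  have hmtop : m ≠ ∞ := (lt_of_le_of_lt hm1 ENNReal.one_lt_top).ne
  have hhalf : m / 2 ≠ 0 := by
    simp only [ne_eq, ENNReal.div_eq_zero_iff]
    push_neg
    exact ⟨hm0.ne', by norm_num⟩
  have hlt : m < m + m / 2 := ENNReal.lt_add_right hmtop hhalf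
  obtain ⟨r, hr𝒮, hrlt⟩ := sInf_lt_iff.mp (show sInf 𝒮 < m + m / 2 from hlt)
  obtain ⟨A, hAm, hAi, hA0, rfl⟩ := hr𝒮
  have hA2m : μ A < m + m := lt_trans hrlt
    (ENNReal.add_lt_add_left hmtop (ENNReal.half_lt_self hm0.ne' hmtop))
  -- atomicity of sets with the (near-)minimal measure
  have atom : ∀ C : Set X, MeasurableSet C → Inv C → μ C = μ A →
      ∀ B : Set X, MeasurableSet B → Inv B → μ (C ∩ B) = 0 ∨ μ (C ∩ B) = μ C := by
    intro C hCm hCi hCA B hBm hBi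
    have hsum : μ (C ∩ B) + μ (C \ B) = μ C := measure_inter_add_diff (μ := μ) C hBm
    by_cases h1 : μ (C ∩ B) = 0
    · exact Or.inl h1
    right
    by_cases h2 : μ (C \ B) = 0
    · rw [← hsum, h2, add_zero]
    exfalso
    have hInvCB : Inv (C ∩ B) := by
      rw [hInvdef] at hCi hBi ⊢
      simp only [preimage_inter] at *
      exact hCi.inter hBi
    have hInvCB' : Inv (C \ B) := by
      rw [hInvdef] at hCi hBi ⊢
      simp only [preimage_diff] at *
      exact hCi.diff hBi
    have i1 : m ≤ μ (C ∩ B) := hm_le (hCm.inter hBm) hInvCB (pos_iff_ne_zero.mpr h1)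
    have i2 : m ≤ μ (C \ B) := hm_le (hCm.diff hBm) hInvCB' (pos_iff_ne_zero.mpr h2)
    have hge : m + m ≤ μ C := by
      rw [← hsum]; exact add_le_add i1 i2
    rw [hCA] at hge
    exact absurd (lt_of_le_of_lt hge hA2m) (lt_irrefl _)
  -- the minimal period k
  have hex : ∃ k' : ℕ, 0 < k' ∧ (S^[k']) ⁻¹' A =ᵐ[μ] A := ⟨N, hN, hAi⟩
  set k : ℕ := Nat.find hex with hkdef
  have hk : 0 < k ∧ (S^[k]) ⁻¹' A =ᵐ[μ] A := Nat.find_spec hex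
  have hkN : k ≤ N := Nat.find_le ⟨hN, hAi⟩
  -- the candidate sets
  have hAjm : ∀ j : ℕ, MeasurableSet ((S^[j]) ⁻¹' A) := fun j => (hSm.iterate j) hAm
  have hAjμ : ∀ j : ℕ, μ ((S^[j]) ⁻¹' A) = μ A := fun j =>
    (hMP j).measure_preimage hAm.nullMeasurableSet
  have hAjInv : ∀ j : ℕ, Inv ((S^[j]) ⁻¹' A) := fun j => InvPre j hAi
  have hAj0 : ∀ j : ℕ, 0 < μ ((S^[j]) ⁻¹' A) := fun j => by rw [hAjμ]; exact hA0
  -- splitting of preimages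
  have hsplit : ∀ a b : ℕ, (S^[a + b]) ⁻¹' A = (S^[b]) ⁻¹' ((S^[a]) ⁻¹' A) := by
    intro a b
    rw [Function.iterate_add, Set.preimage_comp]
  -- periodicity
  have hper : ∀ q : ℕ, (S^[q * k]) ⁻¹' A =ᵐ[μ] A := by
    intro q
    induction q with
    | zero => simp; exact EventuallyEq.rfl
    | succ q ih =>
      have hq : (q + 1) * k = q * k + k := by ring
      rw [hq, hsplit]
      exact (pull k ih).trans hk.2
  have hmod : ∀ i : ℕ, (S^[i]) ⁻¹' A =ᵐ[μ] (S^[i % k]) ⁻¹' A := by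
    intro i
    have he : i / k * k + i % k = i := by rw [mul_comm]; exact Nat.div_add_mod i k
    have h1 : (S^[i / k * k + i % k]) ⁻¹' A =ᵐ[μ] (S^[i % k]) ⁻¹' A := by
      rw [hsplit]
      exact pull _ (hper (i / k))
    rwa [he] at h1
  -- atoms with positive-measure overlap coincide a.e.
  have hatomAj : ∀ j : ℕ, ∀ B : Set X, MeasurableSet B → Inv B →
      μ ((S^[j]) ⁻¹' A ∩ B) = 0 ∨ μ ((S^[j]) ⁻¹' A ∩ B) = μ ((S^[j]) ⁻¹' A) :=
    fun j B hBm hBi => atom _ (hAjm j) (hAjInv j) (hAjμ j) B hBm hBi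
  have haeeq : ∀ i j : ℕ, 0 < μ ((S^[i]) ⁻¹' A ∩ (S^[j]) ⁻¹' A) →
      (S^[i]) ⁻¹' A =ᵐ[μ] (S^[j]) ⁻¹' A := by
    intro i j hpos
    rcases hatomAj i _ (hAjm j) (hAjInv j) with h1 | h1
    · exact absurd h1 hpos.ne'
    rcases hatomAj j _ (hAjm i) (hAjInv i) with h2 | h2
    · rw [inter_comm] at h2; exact absurd h2 hpos.ne'
    rw [ae_eq_set]
    constructor
    · have hsum := measure_inter_add_diff (μ := μ) ((S^[i]) ⁻¹' A) (hAjm j)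
      rw [h1] at hsum
      exact (ENNReal.add_right_inj (measure_ne_top μ _)).mp (by rw [add_zero]; exact hsum)
    · have hsum := measure_inter_add_diff (μ := μ) ((S^[j]) ⁻¹' A) (hAjm i)
      rw [h2] at hsum
      exact (ENNReal.add_right_inj (measure_ne_top μ _)).mp (by rw [add_zero]; exact hsum)
  -- pairwise a.e. disjointness below the period
  have hdisj : ∀ r s : ℕ, r < s → s < k → μ ((S^[r]) ⁻¹' A ∩ (S^[s]) ⁻¹' A) = 0 := by
    intro r s hrs hsk
    by_contra h
    have hpos : 0 < μ ((S^[r]) ⁻¹' A ∩ (S^[s]) ⁻¹' A) := pos_iff_ne_zero.mpr h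
    have heq := haeeq r s hpos
    have hsplit' : (S^[s]) ⁻¹' A = (S^[r]) ⁻¹' ((S^[s - r]) ⁻¹' A) := by
      have hs : s = (s - r) + r := by omega
      conv_lhs => rw [hs, hsplit]
    rw [hsplit'] at heq
    have hAeq : A =ᵐ[μ] (S^[s - r]) ⁻¹' A := push r hAm (hAjm (s - r)) heq
    exact Nat.find_min hex (show s - r < k by omega) ⟨by omega, hAeq.symm⟩
  -- the union has full measure
  have hUk : μ (⋃ j : Fin k, (S^[(j : ℕ)]) ⁻¹' A) = 1 := by
    have hUN : μ (⋃ i : Fin N, (S^[(i : ℕ)]) ⁻¹' A) = 1 := full A hAm hAi hA0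
    set Uk := ⋃ j : Fin k, (S^[(j : ℕ)]) ⁻¹' A with hUkdef
    have hnull : μ ((⋃ i : Fin N, (S^[(i : ℕ)]) ⁻¹' A) \ Uk) = 0 := by
      have hsub : (⋃ i : Fin N, (S^[(i : ℕ)]) ⁻¹' A) \ Uk ⊆
          ⋃ i : Fin N, ((S^[(i : ℕ)]) ⁻¹' A \ (S^[(i : ℕ) % k]) ⁻¹' A) := by
        rintro x ⟨hx1, hx2⟩
        rw [mem_iUnion] at hx1 ⊢
        obtain ⟨i, hi⟩ := hx1
        refine ⟨i, hi, fun hxmod => hx2 ?_⟩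
        rw [hUkdef, mem_iUnion]
        exact ⟨⟨(i : ℕ) % k, Nat.mod_lt _ hk.1⟩, hxmod⟩
      refine measure_mono_null hsub (measure_iUnion_null fun i => ?_)
      exact (ae_eq_set.mp (hmod (i : ℕ))).1
    have h1 : μ Uk ≤ 1 := prob_le_one
    have h2 : (1 : ℝ≥0∞) ≤ μ Uk := by
      calc (1 : ℝ≥0∞) = μ (⋃ i : Fin N, (S^[(i : ℕ)]) ⁻¹' A) := hUN.symm
        _ ≤ μ (Uk ∪ ((⋃ i : Fin N, (S^[(i : ℕ)]) ⁻¹' A) \ Uk)) := by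
            apply measure_mono
            intro x hx
            by_cases hxU : x ∈ Uk
            · exact Or.inl hxU
            · exact Or.inr ⟨hx, hxU⟩
        _ ≤ μ Uk + μ ((⋃ i : Fin N, (S^[(i : ℕ)]) ⁻¹' A) \ Uk) := measure_union_le _ _
        _ = μ Uk := by rw [hnull, add_zero]
    exact le_antisymm h1 h2
  -- ergodicity of T on each piece
  have herg : ∀ j : ℕ, Ergodic T (μ.restrict ((S^[j]) ⁻¹' A)) := by
    intro j
    constructor
    · refine ⟨hT.measurable, ?_⟩
      refine Measure.ext fun s hs => ?_
      rw [Measure.map_apply hT.measurable hs, Measure.restrict_apply (hT.measurable hs),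
        Measure.restrict_apply hs]
      have e1 : (T ⁻¹' s ∩ (S^[j]) ⁻¹' A : Set X) =ᵐ[μ]
          (T ⁻¹' s ∩ T ⁻¹' ((S^[j]) ⁻¹' A) : Set X) :=
        EventuallyEq.inter (EventuallyEq.refl _ _) (hAjInv j).symm
      rw [measure_congr e1, ← preimage_inter,
        hT.measure_preimage (hs.inter (hAjm j)).nullMeasurableSet]
    · constructor
      intro s hs hfs
      rw [eventuallyConst_set']
      have hInvs : Inv s := by
        rw [hInvdef]
        simp only
        rw [hfs]
        exact EventuallyEq.rfl
      rcases hatomAj j s hs hInvs with h | h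
      · left
        rw [ae_eq_empty, Measure.restrict_apply hs, inter_comm]
        exact h
      · right
        rw [ae_eq_univ, Measure.restrict_apply hs.compl]
        have hsum := measure_inter_add_diff (μ := μ) ((S^[j]) ⁻¹' A) hs
        rw [h] at hsum
        have h0 : μ ((S^[j]) ⁻¹' A \ s) = 0 :=
          (ENNReal.add_right_inj (measure_ne_top μ _)).mp (by rw [add_zero]; exact hsum)
        rw [inter_comm, ← diff_eq]
        exact h0
  -- assemble
  refine ⟨k, hk.1, hkN, fun j : Fin k => (S^[(j : ℕ)]) ⁻¹' A, fun j => hAjm _, ?_, hUk, ?_,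
    fun j => herg _⟩
  · intro i j hij
    rcases lt_trichotomy (i : ℕ) (j : ℕ) with h | h | h
    · exact hdisj _ _ h j.isLt
    · exact absurd (Fin.ext h) hij
    · rw [inter_comm]; exact hdisj _ _ h i.isLt
  · intro j
    rw [hAjμ]
    exact le_trans hm_lb (hm_le hAm hAi hA0)
end

section
/- Let (X, 𝒜, m) be a probability space, S : X → X a measure-preserving map, g ∈ L¹(m), and λ > 0. Let (ψ_N)_{N≥1} be a sequence of m-integrable functions on X such that for every N, ψ_N ≤ Σ_{j=0}^{N−1} g∘S^j holds m-almost everywhere, and such that (1/N)·ψ_N → −λ m-almost everywhere as N → ∞. Then there exist c > 0 and N₀ ∈ ℕ such that ∫ ψ_N dm < −c for all N ≥ N₀. -/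
open MeasureTheory Filter Set
open scoped ENNReal

/-- If `ψ_N` is dominated a.e. by the Birkhoff sums of an integrable `g`
and `ψ_N / N → -λ < 0` a.e., then `∫ ψ_N dm < -c < 0` for all large `N`. -/
theorem integral_neg_of_ae_tendsto_neg
    {X : Type*} [MeasurableSpace X] (m : Measure X) [IsProbabilityMeasure m]
    (S : X → X) (hS : MeasurePreserving S m m)
    (g : X → ℝ) (hg : Integrable g m) (lam : ℝ) (hlam : 0 < lam)
    (ψ : ℕ → X → ℝ) (hψint : ∀ N, 1 ≤ N → Integrable (ψ N) m)
    (hsub : ∀ N, 1 ≤ N → ∀ᵐ x ∂m, ψ N x ≤ ∑ j ∈ Finset.range N, g (S^[j] x))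
    (hlim : ∀ᵐ x ∂m, Tendsto (fun N : ℕ => ψ N x / N) atTop (nhds (-lam))) :
    ∃ c > 0, ∃ N₀ : ℕ, ∀ N, N₀ ≤ N → ∫ x, ψ N x ∂m < -c := by
  -- truncation tails F n = (‖g‖ - n)⁺
  set F : ℕ → X → ℝ := fun n x => max (‖g x‖ - n) 0 with hFdef
  have hFmeas : ∀ n, AEStronglyMeasurable (F n) m := fun n =>
    ((hg.aestronglyMeasurable.norm.sub aestronglyMeasurable_const).sup
      aestronglyMeasurable_const)
  have hFnonneg : ∀ n x, 0 ≤ F n x := fun n x => le_max_right _ _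
  have hFle : ∀ n x, F n x ≤ ‖g x‖ := by
    intro n x
    apply max_le
    · have : (0:ℝ) ≤ n := Nat.cast_nonneg n
      linarith
    · exact norm_nonneg _
  have hFint : ∀ n, Integrable (F n) m := by
    intro n
    refine (hg.norm).mono' (hFmeas n) ?_
    filter_upwards with x
    rw [Real.norm_eq_abs, abs_of_nonneg (hFnonneg n x)]
    exact hFle n x
  have hFtend : Tendsto (fun n => ∫ x, F n x ∂m) atTop (nhds 0) := by
    have h0 : (0:ℝ) = ∫ _x, (0:ℝ) ∂m := by simp
    rw [h0]
    refine tendsto_integral_of_dominated_convergence (fun x => ‖g x‖) hFmeas hg.norm ?_ ?_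
    · intro n
      filter_upwards with x
      rw [Real.norm_eq_abs, abs_of_nonneg (hFnonneg n x)]
      exact hFle n x
    · filter_upwards with x
      obtain ⟨M, hM⟩ := exists_nat_ge (‖g x‖)
      refine Tendsto.congr' ?_ tendsto_const_nhds
      filter_upwards [eventually_ge_atTop M] with n hn
      have hle : ‖g x‖ - n ≤ 0 := by
        have : (M:ℝ) ≤ n := by exact_mod_cast hn
        linarith
      exact (max_eq_right hle).symm
  -- choose K with small tail
  obtain ⟨K, hK⟩ : ∃ K : ℕ, ∫ x, F K x ∂m < lam / 4 :=
    (hFtend.eventually (eventually_lt_nhds (show (0:ℝ) < lam/4 by linarith))).exists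
  have hK0 : (0:ℝ) ≤ K := Nat.cast_nonneg K
  -- pointwise bound on g: g y ≤ K + F K y
  have hgle : ∀ y, g y ≤ K + F K y := by
    intro y
    have h1 : g y ≤ ‖g y‖ := le_abs_self _
    have h2 : ‖g y‖ - K ≤ F K y := le_max_left _ _
    linarith
  -- composition integrals
  have hcompint : ∀ j : ℕ, Integrable (fun x => F K (S^[j] x)) m := by
    intro j
    have hmp := hS.iterate j
    exact (integrable_map_measure (by rw [hmp.map_eq]; exact hFmeas K)
      hmp.measurable.aemeasurable).mp (by rw [hmp.map_eq]; exact hFint K)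
  have hcomp : ∀ j : ℕ, ∫ x, F K (S^[j] x) ∂m = ∫ x, F K x ∂m := by
    intro j
    have hmp := hS.iterate j
    conv_rhs => rw [← hmp.map_eq]
    rw [integral_map hmp.measurable.aemeasurable (by rw [hmp.map_eq]; exact hFmeas K)]
  -- the truncated functions w N
  set w : ℕ → X → ℝ := fun N x => max (min (ψ N x / N) K) (-(2 * lam)) with hwdef
  have hwmeas : ∀ N, 1 ≤ N → AEStronglyMeasurable (w N) m := by
    intro N hN
    exact ((((hψint N hN).div_const _).aestronglyMeasurable).inf
      aestronglyMeasurable_const).sup aestronglyMeasurable_const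
  have hwbound : ∀ N x, ‖w N x‖ ≤ max (K:ℝ) (2 * lam) := by
    intro N x
    rw [Real.norm_eq_abs, abs_le]
    constructor
    · have h1 : -(2*lam) ≤ w N x := le_max_right _ _
      have h2 : (2*lam) ≤ max (K:ℝ) (2*lam) := le_max_right _ _
      linarith
    · have h1 : w N x ≤ max (K:ℝ) (-(2*lam)) := max_le_max (min_le_right _ _) le_rfl
      have h2 : max (K:ℝ) (-(2*lam)) ≤ max (K:ℝ) (2*lam) := by
        apply max_le (le_max_left _ _)
        have h3 : -(2*lam) ≤ 2*lam := by linarith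
        exact h3.trans (le_max_right _ _)
      linarith
  have hwint : ∀ N, 1 ≤ N → Integrable (w N) m := by
    intro N hN
    refine (integrable_const (max (K:ℝ) (2*lam))).mono' (hwmeas N hN) ?_
    filter_upwards with x
    simpa using hwbound N x
  -- DCT: ∫ w (N+1) → -lam
  have hwtend : Tendsto (fun N => ∫ x, w (N + 1) x ∂m) atTop (nhds (-lam)) := by
    have h0 : -lam = ∫ _x, (-lam) ∂m := by simp
    rw [h0]
    refine tendsto_integral_of_dominated_convergence (fun _ => max (K:ℝ) (2*lam))
      (fun N => hwmeas (N+1) (by omega)) (integrable_const _) ?_ ?_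
    · intro n
      filter_upwards with x
      simpa using hwbound (n+1) x
    · filter_upwards [hlim] with x hx
      have h1 : Tendsto (fun N : ℕ => ψ (N+1) x / (((N+1 : ℕ)):ℝ)) atTop (nhds (-lam)) :=
        hx.comp (tendsto_add_atTop_nat 1)
      have h2 := (h1.min (tendsto_const_nhds (x := (K:ℝ)))).max
        (tendsto_const_nhds (x := (-(2*lam))))
      have heq : max (min (-lam) (K:ℝ)) (-(2*lam)) = -lam := by
        rw [min_eq_left (by linarith), max_eq_left (by linarith)]
      rw [heq] at h2
      exact h2
  -- key integral inequality
  have key : ∀ N, 1 ≤ N → (∫ x, ψ N x ∂m) / N ≤ ∫ x, w N x ∂m + ∫ x, F K x ∂m := by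
    intro N hN
    have hNpos : (0:ℝ) < N := by exact_mod_cast hN
    have hsumint : Integrable (fun x => ∑ j ∈ Finset.range N, F K (S^[j] x)) m :=
      integrable_finset_sum _ (fun j _ => hcompint j)
    have hrhsint : Integrable
        (fun x => w N x + (1 / (N:ℝ)) * ∑ j ∈ Finset.range N, F K (S^[j] x)) m :=
      (hwint N hN).add (hsumint.const_mul _)
    have hmono : ∀ᵐ x ∂m,
        ψ N x / N ≤ w N x + (1 / (N:ℝ)) * ∑ j ∈ Finset.range N, F K (S^[j] x) := by
      filter_upwards [hsub N hN] with x hx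
      have hBnn : 0 ≤ (1 / (N:ℝ)) * ∑ j ∈ Finset.range N, F K (S^[j] x) := by
        apply mul_nonneg (by positivity)
        exact Finset.sum_nonneg fun j _ => hFnonneg K _
      by_cases hcase : ψ N x / N ≤ K
      · have h1 : ψ N x / N ≤ w N x := by
          rw [hwdef]
          simp only
          rw [min_eq_left hcase]
          exact le_max_left _ _
        linarith
      · push_neg at hcase
        have hwval : w N x = K := by
          rw [hwdef]
          simp only
          rw [min_eq_right hcase.le, max_eq_left (by linarith)]
        have hsum : ψ N x ≤ N * K + ∑ j ∈ Finset.range N, F K (S^[j] x) := by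
          calc ψ N x ≤ ∑ j ∈ Finset.range N, g (S^[j] x) := hx
            _ ≤ ∑ j ∈ Finset.range N, ((K:ℝ) + F K (S^[j] x)) :=
                Finset.sum_le_sum fun j _ => hgle _
            _ = N * K + ∑ j ∈ Finset.range N, F K (S^[j] x) := by
                rw [Finset.sum_add_distrib, Finset.sum_const, Finset.card_range]
                simp [nsmul_eq_mul]
        have hdiv : ψ N x / N ≤ (N * K + ∑ j ∈ Finset.range N, F K (S^[j] x)) / N :=
          (div_le_div_iff_of_pos_right hNpos).mpr hsum
        have heq : ((N:ℝ) * K + ∑ j ∈ Finset.range N, F K (S^[j] x)) / N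
            = K + (1 / (N:ℝ)) * ∑ j ∈ Finset.range N, F K (S^[j] x) := by
          field_simp
        rw [heq] at hdiv
        rw [hwval]
        linarith
    calc (∫ x, ψ N x ∂m) / N = ∫ x, ψ N x / N ∂m := (integral_div _ _).symm
      _ ≤ ∫ x, (w N x + (1 / (N:ℝ)) * ∑ j ∈ Finset.range N, F K (S^[j] x)) ∂m :=
          integral_mono_ae ((hψint N hN).div_const _) hrhsint hmono
      _ = ∫ x, w N x ∂m
          + (1 / (N:ℝ)) * ∫ x, (∑ j ∈ Finset.range N, F K (S^[j] x)) ∂m := by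
          rw [integral_add (hwint N hN) (hsumint.const_mul _), integral_const_mul]
      _ = ∫ x, w N x ∂m + ∫ x, F K x ∂m := by
          rw [integral_finset_sum _ (fun j _ => hcompint j)]
          have : ∑ j ∈ Finset.range N, ∫ x, F K (S^[j] x) ∂m
              = (N:ℝ) * ∫ x, F K x ∂m := by
            rw [Finset.sum_congr rfl (fun j _ => hcomp j), Finset.sum_const,
              Finset.card_range, nsmul_eq_mul]
          rw [this]
          field_simp
  -- conclusion
  have hev : ∀ᶠ N in atTop, ∫ x, w (N+1) x ∂m < -lam/2 :=
    hwtend.eventually (eventually_lt_nhds (by linarith : -lam < -lam/2))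
  obtain ⟨N₁, hN₁⟩ := eventually_atTop.mp hev
  refine ⟨lam/4, by linarith, N₁ + 1, ?_⟩
  intro N hN
  have h1N : 1 ≤ N := by omega
  have hNpos : (0:ℝ) < N := by exact_mod_cast h1N
  have hwN : ∫ x, w N x ∂m < -lam/2 := by
    obtain ⟨M, rfl⟩ : ∃ M, N = M + 1 := ⟨N - 1, by omega⟩
    exact hN₁ M (by omega)
  have h2 : (∫ x, ψ N x ∂m) / N < -lam/4 := lt_of_le_of_lt (key N h1N) (by linarith)
  have h3 : ∫ x, ψ N x ∂m < -lam/4 * N := (div_lt_iff₀ hNpos).mp h2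
  have hN1R : (1:ℝ) ≤ N := by exact_mod_cast h1N
  have h4 : -lam/4 * N ≤ -(lam/4) := by nlinarith
  linarith
end

section
/- Let (X, 𝒜, m) be a probability space, S : X → X a measure-preserving map that is ergodic with respect to m, N ≥ 1 an integer, c > 0, and g ∈ L¹(m) with ∫ g dm < −c. Then there exists a measurable set A ⊆ X with m(A) ≥ 1/N such that A is S^N-invariant mod m (m(A Δ (S^N)^{−1}A) = 0) and for m-almost every x ∈ A the limit lim_{n→∞} (1/n) Σ_{i=0}^{n−1} g((S^N)^i x) exists and is strictly less than −c. -/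
open MeasureTheory Filter Set
open scoped ENNReal symmDiff

set_option linter.unusedSectionVars false
set_option linter.unnecessarySimpa false
namespace BirkhoffMax
variable {X : Type*} [MeasurableSpace X]

/-- `maxF T f n x = max (0, max_{1 ≤ k ≤ n} S_k f x)`. -/
noncomputable def maxF (T : X → X) (f : X → ℝ) : ℕ → X → ℝ
  | 0 => fun _ => 0
  | n + 1 => fun x => max 0 (f x + maxF T f n (T x))

variable {T : X → X} {f : X → ℝ}

lemma maxF_nonneg (n : ℕ) (x : X) : 0 ≤ maxF T f n x := by
  cases n with
  | zero => simp [maxF]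
  | succ n => simp [maxF]

lemma maxF_mono (n : ℕ) (x : X) : maxF T f n x ≤ maxF T f (n + 1) x := by
  induction n generalizing x with
  | zero => exact maxF_nonneg 1 x
  | succ n ih =>
    simp only [maxF]
    exact max_le_max le_rfl (add_le_add le_rfl (ih (T x)))

lemma birkhoffSum_le_maxF (n : ℕ) (x : X) : birkhoffSum T f n x ≤ maxF T f n x := by
  induction n generalizing x with
  | zero => simp [maxF]
  | succ n ih =>
    rw [birkhoffSum_succ']
    calc f x + birkhoffSum T f n (T x) ≤ f x + maxF T f n (T x) := by linarith [ih (T x)]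
    _ ≤ maxF T f (n + 1) x := le_max_right _ _

lemma maxF_measurable (hT : Measurable T) (hf : Measurable f) (n : ℕ) :
    Measurable (maxF T f n) := by
  induction n with
  | zero => simpa [maxF] using measurable_const
  | succ n ih =>
    simp only [maxF]
    exact measurable_const.max (hf.add (ih.comp hT))

lemma maxF_integrable {μ : Measure X} (hT : MeasurePreserving T μ μ) (hfm : Measurable f)
    (hfi : Integrable f μ) (n : ℕ) : Integrable (maxF T f n) μ := by
  induction n with
  | zero => simpa [maxF] using integrable_zero X ℝ μ
  | succ n ih =>
    simp only [maxF]
    have : Integrable (fun x => maxF T f n (T x)) μ :=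
      (hT.integrable_comp (maxF_measurable hT.measurable hfm n).aestronglyMeasurable).2 ih
    exact ((integrable_zero X ℝ μ).sup (hfi.add this) : Integrable (fun x => (0:ℝ) ⊔ _) μ)

/-- **Maximal ergodic theorem** (Garsia's argument), in the form we need. -/
theorem maximal_ergodic (μ : Measure X) [IsFiniteMeasure μ] (hT : MeasurePreserving T μ μ)
    (hfm : Measurable f) (hfi : Integrable f μ)
    (h : ∀ᵐ x ∂μ, ∃ n, 0 < birkhoffSum T f n x) : 0 ≤ ∫ x, f x ∂μ := by
  set E : ℕ → Set X := fun n => {x | 0 < maxF T f n x} with hE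
  have hEmeas : ∀ n, MeasurableSet (E n) := fun n =>
    measurableSet_lt measurable_const (maxF_measurable hT.measurable hfm n)
  have hEmono : Monotone E := monotone_nat_of_le_succ fun n x hx =>
    lt_of_lt_of_le hx (maxF_mono n x)
  -- each piece has nonnegative integral
  have hpiece : ∀ n, 0 ≤ ∫ x in E n, f x ∂μ := by
    intro n
    cases n with
    | zero => simp [hE, maxF]
    | succ n =>
      have hFm := maxF_measurable hT.measurable hfm (n + 1)
      have hFi := maxF_integrable hT hfm hfi (n + 1)
      have hFTi : Integrable (fun x => maxF T f (n + 1) (T x)) μ :=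
        (hT.integrable_comp hFm.aestronglyMeasurable).2 hFi
      have key : ∀ x ∈ E (n + 1), maxF T f (n+1) x - maxF T f (n+1) (T x) ≤ f x := by
        intro x hx
        have hx' : 0 < maxF T f (n+1) x := hx
        have : maxF T f (n+1) x = f x + maxF T f n (T x) := by
          by_contra hne
          have : maxF T f (n+1) x = 0 := by
            simp only [maxF] at hx' ⊢
            rcases max_choice 0 (f x + maxF T f n (T x)) with h' | h'
            · exact h'
            · exact absurd h' (by simpa [maxF] using hne)
          linarith
        linarith [maxF_mono (T := T) (f := f) n (T x)]
      have step1 : ∫ x in E (n+1), (maxF T f (n+1) x - maxF T f (n+1) (T x)) ∂μ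
          ≤ ∫ x in E (n+1), f x ∂μ :=
        setIntegral_mono_on (hFi.sub hFTi).integrableOn hfi.integrableOn (hEmeas (n+1)) key
      have e1 : ∫ x in E (n+1), maxF T f (n+1) x ∂μ = ∫ x, maxF T f (n+1) x ∂μ :=
        setIntegral_eq_integral_of_forall_compl_eq_zero fun x hx => by
          have h0 := maxF_nonneg (T := T) (f := f) (n+1) x
          have : ¬ (0 < maxF T f (n+1) x) := hx
          linarith
      have e2 : ∫ x in E (n+1), maxF T f (n+1) (T x) ∂μ ≤ ∫ x, maxF T f (n+1) (T x) ∂μ :=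
        setIntegral_le_integral hFTi
          (Eventually.of_forall fun x => maxF_nonneg (n+1) (T x))
      have e3 : ∫ x, maxF T f (n+1) (T x) ∂μ = ∫ x, maxF T f (n+1) x ∂μ := by
        rw [← integral_map hT.measurable.aemeasurable hFm.aestronglyMeasurable, hT.map_eq]
      have hsub : ∫ x in E (n+1), (maxF T f (n+1) x - maxF T f (n+1) (T x)) ∂μ
          = (∫ x in E (n+1), maxF T f (n+1) x ∂μ) - ∫ x in E (n+1), maxF T f (n+1) (T x) ∂μ :=
        integral_sub hFi.integrableOn hFTi.integrableOn
      calc (0:ℝ) = ∫ x, maxF T f (n+1) x ∂μ - ∫ x, maxF T f (n+1) x ∂μ := by ring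
      _ ≤ ∫ x in E (n+1), maxF T f (n+1) x ∂μ - ∫ x in E (n+1), maxF T f (n+1) (T x) ∂μ := by
          rw [e1]; linarith [e2, e3]
      _ = ∫ x in E (n+1), (maxF T f (n+1) x - maxF T f (n+1) (T x)) ∂μ := hsub.symm
      _ ≤ ∫ x in E (n+1), f x ∂μ := step1
  -- pass to the union
  have hconull : ∀ᵐ x ∂μ, x ∈ ⋃ n, E n := by
    filter_upwards [h] with x ⟨n, hn⟩
    exact mem_iUnion.2 ⟨n, lt_of_lt_of_le hn (birkhoffSum_le_maxF n x)⟩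
  have hlim := tendsto_setIntegral_of_monotone hEmeas hEmono hfi.integrableOn
  have hfull : ∫ x in ⋃ n, E n, f x ∂μ = ∫ x, f x ∂μ :=
    setIntegral_eq_integral_of_ae_compl_eq_zero <| by
      filter_upwards [hconull] with x hx hx'; exact absurd hx hx'
  rw [← hfull]
  exact ge_of_tendsto' hlim hpiece
end BirkhoffMax
section Key
variable {X : Type*} [MeasurableSpace X] {T : X → X} {g : X → ℝ}

lemma birkhoffSum_sub_const (T : X → X) (g : X → ℝ) (β : ℝ) (n : ℕ) (x : X) :
    birkhoffSum T (fun y => g y - β) n x = birkhoffSum T g n x - n * β := by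
  simp only [birkhoffSum, Finset.sum_sub_distrib, Finset.sum_const, Finset.card_range,
    nsmul_eq_mul]

lemma MeasureTheory.MeasurePreserving.restrict_invariant {m : Measure X} (hT : MeasurePreserving T m m)
    {E : Set X} (hEm : MeasurableSet E) (hE : T ⁻¹' E = E) :
    MeasurePreserving T (m.restrict E) (m.restrict E) := by
  refine ⟨hT.measurable, ?_⟩
  conv_lhs => rw [← hE]
  rw [← Measure.restrict_map hT.measurable hEm, hT.map_eq]

/-- If a.e. point of the invariant set `E` has some Birkhoff average exceeding `β`,
then `β * m E ≤ ∫_E g`. -/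
theorem key_lower (m : Measure X) [IsFiniteMeasure m] (hT : MeasurePreserving T m m)
    {E : Set X} (hEm : MeasurableSet E) (hE : T ⁻¹' E = E)
    (hgm : Measurable g) (hgi : Integrable g m) (β : ℝ)
    (h : ∀ᵐ x ∂m, x ∈ E → ∃ n, 0 < birkhoffSum T g n x - n * β) :
    β * (m E).toReal ≤ ∫ x in E, g x ∂m := by
  set μ := m.restrict E with hμ
  haveI : IsFiniteMeasure μ := inferInstance
  have hT' : MeasurePreserving T μ μ := hT.restrict_invariant hEm hE
  have hgi' : Integrable g μ := hgi.integrableOn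
  have h0 := BirkhoffMax.maximal_ergodic (f := fun y => g y - β) μ hT'
    (hgm.sub measurable_const) (hgi'.sub (integrable_const β))
    (by
      filter_upwards [ae_restrict_mem hEm, ae_restrict_of_ae h] with x hx hx2
      obtain ⟨n, hn⟩ := hx2 hx
      exact ⟨n, by rwa [birkhoffSum_sub_const]⟩)
  have hInt : ∫ x, (g x - β) ∂μ = (∫ x in E, g x ∂m) - β * (m E).toReal := by
    rw [integral_sub hgi' (integrable_const β), integral_const]
    simp [hμ, Measure.restrict_apply_univ, smul_eq_mul, mul_comm, measureReal_def]
  linarith [hInt ▸ h0]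

theorem key_upper (m : Measure X) [IsFiniteMeasure m] (hT : MeasurePreserving T m m)
    {E : Set X} (hEm : MeasurableSet E) (hE : T ⁻¹' E = E)
    (hgm : Measurable g) (hgi : Integrable g m) (α : ℝ)
    (h : ∀ᵐ x ∂m, x ∈ E → ∃ n, 0 < n * α - birkhoffSum T g n x) :
    ∫ x in E, g x ∂m ≤ α * (m E).toReal := by
  have hneg := key_lower m hT hEm hE hgm.neg hgi.neg (-α) (h.mono fun x hx' hx => by
    obtain ⟨n, hn⟩ := hx' hx
    refine ⟨n, ?_⟩
    have : birkhoffSum T (-g) n x = -birkhoffSum T g n x := by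
      simp [birkhoffSum, Finset.sum_neg_distrib]
    rw [this]; linarith)
  have : ∫ x in E, (-g) x ∂m = -∫ x in E, g x ∂m := integral_neg g
  simp only [Pi.neg_apply] at hneg ⊢
  rw [integral_neg] at hneg
  linarith
end Key
section ERealLemmas

lemma EReal.le_of_forall_coe_gt {a b : EReal} (h : ∀ r : ℝ, b < (r:EReal) → a ≤ (r:EReal)) :
    a ≤ b := by
  by_contra hab
  push_neg at hab
  obtain ⟨y, hy1, hy2⟩ := EReal.exists_between_coe_real hab
  exact absurd (h y hy1) (not_le.2 hy2)

lemma EReal.ge_of_forall_coe_lt {a b : EReal} (h : ∀ r : ℝ, (r:EReal) < b → (r:EReal) ≤ a) :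
    b ≤ a := by
  by_contra hab
  push_neg at hab
  obtain ⟨y, hy1, hy2⟩ := EReal.exists_between_coe_real hab
  exact absurd (h y hy2) (not_le.2 hy1)

lemma limsup_coe_le_of_sub {u v : ℕ → ℝ}
    (h : Filter.Tendsto (fun n => v n - u n) Filter.atTop (nhds 0)) :
    Filter.limsup (fun n => (v n : EReal)) Filter.atTop
      ≤ Filter.limsup (fun n => (u n : EReal)) Filter.atTop := by
  apply EReal.le_of_forall_coe_gt
  intro r hr
  obtain ⟨r', hr1, hr2⟩ := EReal.exists_between_coe_real hr
  have hrr : r' < r := by exact_mod_cast hr2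
  have hev : ∀ᶠ n in Filter.atTop, (u n : EReal) < (r' : EReal) :=
    Filter.eventually_lt_of_limsup_lt hr1
  have hev2 : ∀ᶠ n in Filter.atTop, |v n - u n| < r - r' := by
    have hpos : (0:ℝ) < r - r' := sub_pos.2 hrr
    have := h.eventually (Metric.ball_mem_nhds (0:ℝ) hpos)
    filter_upwards [this] with n hn
    simpa [Real.dist_eq] using hn
  refine Filter.limsup_le_of_le (by isBoundedDefault) ?_
  filter_upwards [hev, hev2] with n h1 h2
  have h1' : u n < r' := by exact_mod_cast h1
  have h2' := abs_lt.1 h2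
  have : v n ≤ r := by linarith [h2'.1, h2'.2]
  exact_mod_cast this

lemma liminf_coe_ge_of_sub {u v : ℕ → ℝ}
    (h : Filter.Tendsto (fun n => v n - u n) Filter.atTop (nhds 0)) :
    Filter.liminf (fun n => (u n : EReal)) Filter.atTop
      ≤ Filter.liminf (fun n => (v n : EReal)) Filter.atTop := by
  apply EReal.ge_of_forall_coe_lt
  intro r hr
  obtain ⟨r', hr1, hr2⟩ := EReal.exists_between_coe_real hr
  have hrr : r < r' := by exact_mod_cast hr1
  have hev : ∀ᶠ n in Filter.atTop, (r' : EReal) < (u n : EReal) :=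
    Filter.eventually_lt_of_lt_liminf hr2
  have hev2 : ∀ᶠ n in Filter.atTop, |v n - u n| < r' - r := by
    have hpos : (0:ℝ) < r' - r := sub_pos.2 hrr
    have := h.eventually (Metric.ball_mem_nhds (0:ℝ) hpos)
    filter_upwards [this] with n hn
    simpa [Real.dist_eq] using hn
  refine Filter.le_liminf_of_le (by isBoundedDefault) ?_
  filter_upwards [hev, hev2] with n h1 h2
  have h1' : r' < u n := by exact_mod_cast h1
  have h2' := abs_lt.1 h2
  have : r ≤ v n := by linarith [h2'.1, h2'.2]
  exact_mod_cast this

lemma limsup_coe_eq_of_sub {u v : ℕ → ℝ}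
    (h : Filter.Tendsto (fun n => v n - u n) Filter.atTop (nhds 0)) :
    Filter.limsup (fun n => (v n : EReal)) Filter.atTop
      = Filter.limsup (fun n => (u n : EReal)) Filter.atTop := by
  refine le_antisymm (limsup_coe_le_of_sub h) (limsup_coe_le_of_sub ?_)
  simpa using h.neg

lemma liminf_coe_eq_of_sub {u v : ℕ → ℝ}
    (h : Filter.Tendsto (fun n => v n - u n) Filter.atTop (nhds 0)) :
    Filter.liminf (fun n => (v n : EReal)) Filter.atTop
      = Filter.liminf (fun n => (u n : EReal)) Filter.atTop := by
  refine le_antisymm ?_ (liminf_coe_ge_of_sub h)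
  refine liminf_coe_ge_of_sub ?_
  simpa using h.neg

lemma mul_pert_aux {u c r' δ : ℝ} (hu : u ≤ r') (hc : |c - 1| < δ) (hδ1 : δ ≤ 1) :
    u * c ≤ r' + (|r'| + 1) * δ := by
  have hδ0 : 0 < δ := lt_of_le_of_lt (abs_nonneg _) hc
  have hc' := abs_lt.1 hc
  rcases le_or_gt (|u|) (|r'|) with hcase | hcase
  · have h1 : u * c - u = u * (c - 1) := by ring
    have h2 : |u * (c - 1)| ≤ |r'| * δ := by
      rw [abs_mul]
      exact mul_le_mul hcase (le_of_lt hc) (abs_nonneg _) (abs_nonneg _)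
    have h3 := le_abs_self (u * (c - 1))
    nlinarith [abs_nonneg r']
  · have hu0 : u < 0 := by
      rcases le_or_gt 0 u with h | h
      · have : |u| = u := abs_of_nonneg h
        have : u ≤ |r'| := le_trans hu (le_abs_self r')
        nlinarith [abs_of_nonneg h]
      · exact h
    have hcpos : 0 ≤ 1 - δ := by linarith
    have : u * c ≤ u * (1 - δ) := by nlinarith [hc'.1]
    have h4 : u < -|r'| := by
      rcases abs_cases u with ⟨h5, _⟩ | ⟨h5, _⟩
      · nlinarith
      · nlinarith [le_abs_self r', neg_abs_le r']
    nlinarith [abs_nonneg r', neg_abs_le r']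

lemma mul_pert_aux' {u c r' δ : ℝ} (hu : r' ≤ u) (hc : |c - 1| < δ) (hδ1 : δ ≤ 1) :
    r' - (|r'| + 1) * δ ≤ u * c := by
  have := mul_pert_aux (u := -u) (r' := -r') (by linarith) hc hδ1
  rw [abs_neg] at this
  nlinarith

lemma limsup_coe_mul_le {u c : ℕ → ℝ} (hc : Filter.Tendsto c Filter.atTop (nhds 1)) :
    Filter.limsup (fun n => ((u n * c n : ℝ) : EReal)) Filter.atTop
      ≤ Filter.limsup (fun n => (u n : EReal)) Filter.atTop := by
  apply EReal.le_of_forall_coe_gt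
  intro r hr
  obtain ⟨r', hr1, hr2⟩ := EReal.exists_between_coe_real hr
  have hrr : r' < r := by exact_mod_cast hr2
  set δ : ℝ := min 1 ((r - r') / (|r'| + 2)) with hδdef
  have ha2 : (0:ℝ) < |r'| + 2 := by positivity
  have hδpos : 0 < δ := lt_min one_pos (div_pos (by linarith) ha2)
  have hδ1 : δ ≤ 1 := min_le_left _ _
  have hbound : r' + (|r'| + 1) * δ < r := by
    have h1 : δ ≤ (r - r') / (|r'| + 2) := min_le_right _ _
    have h2 : (|r'| + 1) * δ ≤ (|r'| + 1) * ((r - r') / (|r'| + 2)) := by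
      apply mul_le_mul_of_nonneg_left h1 (by positivity)
    have h3 : (|r'| + 1) * ((r - r') / (|r'| + 2)) < r - r' := by
      rw [mul_div_assoc']
      exact (div_lt_iff₀ ha2).2 (by nlinarith [abs_nonneg r'])
    linarith
  have hev : ∀ᶠ n in Filter.atTop, (u n : EReal) < (r' : EReal) :=
    Filter.eventually_lt_of_limsup_lt hr1
  have hev2 : ∀ᶠ n in Filter.atTop, |c n - 1| < δ := by
    have := hc.eventually (Metric.ball_mem_nhds (1:ℝ) hδpos)
    filter_upwards [this] with n hn
    simpa [Real.dist_eq] using hn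
  refine Filter.limsup_le_of_le (by isBoundedDefault) ?_
  filter_upwards [hev, hev2] with n h1 h2
  have h1' : u n < r' := by exact_mod_cast h1
  have := mul_pert_aux (le_of_lt h1') h2 hδ1
  have : u n * c n ≤ r := by linarith
  exact_mod_cast this

lemma liminf_coe_mul_ge {u c : ℕ → ℝ} (hc : Filter.Tendsto c Filter.atTop (nhds 1)) :
    Filter.liminf (fun n => (u n : EReal)) Filter.atTop
      ≤ Filter.liminf (fun n => ((u n * c n : ℝ) : EReal)) Filter.atTop := by
  apply EReal.ge_of_forall_coe_lt
  intro r hr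
  obtain ⟨r', hr1, hr2⟩ := EReal.exists_between_coe_real hr
  have hrr : r < r' := by exact_mod_cast hr1
  set δ : ℝ := min 1 ((r' - r) / (|r'| + 2)) with hδdef
  have ha2 : (0:ℝ) < |r'| + 2 := by positivity
  have hδpos : 0 < δ := lt_min one_pos (div_pos (by linarith) ha2)
  have hδ1 : δ ≤ 1 := min_le_left _ _
  have hbound : r < r' - (|r'| + 1) * δ := by
    have h1 : δ ≤ (r' - r) / (|r'| + 2) := min_le_right _ _
    have h2 : (|r'| + 1) * δ ≤ (|r'| + 1) * ((r' - r) / (|r'| + 2)) := by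
      apply mul_le_mul_of_nonneg_left h1 (by positivity)
    have h3 : (|r'| + 1) * ((r' - r) / (|r'| + 2)) < r' - r := by
      rw [mul_div_assoc']
      exact (div_lt_iff₀ ha2).2 (by nlinarith [abs_nonneg r'])
    linarith
  have hev : ∀ᶠ n in Filter.atTop, (r' : EReal) < (u n : EReal) :=
    Filter.eventually_lt_of_lt_liminf hr2
  have hev2 : ∀ᶠ n in Filter.atTop, |c n - 1| < δ := by
    have := hc.eventually (Metric.ball_mem_nhds (1:ℝ) hδpos)
    filter_upwards [this] with n hn
    simpa [Real.dist_eq] using hn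
  refine Filter.le_liminf_of_le (by isBoundedDefault) ?_
  filter_upwards [hev, hev2] with n h1 h2
  have h1' : r' < u n := by exact_mod_cast h1
  have := mul_pert_aux' (le_of_lt h1') h2 hδ1
  have : r ≤ u n * c n := by linarith
  exact_mod_cast this

lemma limsup_coe_mul_eq {u c : ℕ → ℝ} (hc : Filter.Tendsto c Filter.atTop (nhds 1)) :
    Filter.limsup (fun n => ((u n * c n : ℝ) : EReal)) Filter.atTop
      = Filter.limsup (fun n => (u n : EReal)) Filter.atTop := by
  refine le_antisymm (limsup_coe_mul_le hc) ?_
  have hne : ∀ᶠ n in Filter.atTop, c n ≠ 0 := hc.eventually_ne (by norm_num)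
  have hc' : Filter.Tendsto (fun n => (c n)⁻¹) Filter.atTop (nhds 1) := by
    simpa using hc.inv₀ one_ne_zero
  have h1 : Filter.limsup (fun n => (u n : EReal)) Filter.atTop
      = Filter.limsup (fun n => ((u n * c n * (c n)⁻¹ : ℝ) : EReal)) Filter.atTop := by
    apply Filter.limsup_congr
    filter_upwards [hne] with n hn
    rw [mul_assoc, mul_inv_cancel₀ hn, mul_one]
  rw [h1]
  exact limsup_coe_mul_le (u := fun n => u n * c n) hc'

lemma liminf_coe_mul_eq {u c : ℕ → ℝ} (hc : Filter.Tendsto c Filter.atTop (nhds 1)) :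
    Filter.liminf (fun n => ((u n * c n : ℝ) : EReal)) Filter.atTop
      = Filter.liminf (fun n => (u n : EReal)) Filter.atTop := by
  refine le_antisymm ?_ (liminf_coe_mul_ge hc)
  have hne : ∀ᶠ n in Filter.atTop, c n ≠ 0 := hc.eventually_ne (by norm_num)
  have hc' : Filter.Tendsto (fun n => (c n)⁻¹) Filter.atTop (nhds 1) := by
    simpa using hc.inv₀ one_ne_zero
  have h1 : Filter.liminf (fun n => (u n : EReal)) Filter.atTop
      = Filter.liminf (fun n => ((u n * c n * (c n)⁻¹ : ℝ) : EReal)) Filter.atTop := by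
    apply Filter.liminf_congr
    filter_upwards [hne] with n hn
    rw [mul_assoc, mul_inv_cancel₀ hn, mul_one]
  rw [h1]
  exact liminf_coe_mul_ge (u := fun n => u n * c n) hc'

end ERealLemmas
section Dynamics
variable {X : Type*} [MeasurableSpace X] {T : X → X} {g : X → ℝ}

/-- Birkhoff average. -/
noncomputable def bAvg (T : X → X) (g : X → ℝ) (x : X) (n : ℕ) : ℝ :=
  (n:ℝ)⁻¹ * birkhoffSum T g n x

noncomputable def eLimsup (T : X → X) (g : X → ℝ) (x : X) : EReal :=
  Filter.limsup (fun n => ((bAvg T g x n : ℝ) : EReal)) Filter.atTop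

noncomputable def eLiminf (T : X → X) (g : X → ℝ) (x : X) : EReal :=
  Filter.liminf (fun n => ((bAvg T g x n : ℝ) : EReal)) Filter.atTop

lemma measurable_birkhoffSum (hT : Measurable T) (hg : Measurable g) (n : ℕ) :
    Measurable (birkhoffSum T g n) :=
  Finset.measurable_sum _ fun i _ => hg.comp (hT.iterate i)

lemma measurable_eLimsup (hT : Measurable T) (hg : Measurable g) :
    Measurable (eLimsup T g) :=
  Measurable.limsup fun n => measurable_coe_real_ereal.comp
    (measurable_const.mul (measurable_birkhoffSum hT hg n))

lemma measurable_eLiminf (hT : Measurable T) (hg : Measurable g) :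
    Measurable (eLiminf T g) :=
  Measurable.liminf fun n => measurable_coe_real_ereal.comp
    (measurable_const.mul (measurable_birkhoffSum hT hg n))

lemma bAvg_comp_eq (x : X) {n : ℕ} (hn : 1 ≤ n) :
    bAvg T g (T x) n
      = (bAvg T g x (n+1) * (((n:ℝ)+1)/(n:ℝ))) - g x * (n:ℝ)⁻¹ := by
  have hn0 : (n:ℝ) ≠ 0 := Nat.cast_ne_zero.2 (by omega)
  have hn1 : ((n:ℝ)+1) ≠ 0 := by positivity
  have h1 : birkhoffSum T g n (T x) = birkhoffSum T g (n+1) x - g x := by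
    rw [birkhoffSum_succ']; ring
  simp only [bAvg, h1]
  push_cast
  field_simp

lemma tendsto_ratio : Filter.Tendsto (fun n : ℕ => ((n:ℝ)+1)/(n:ℝ)) Filter.atTop (nhds 1) := by
  have h : ∀ᶠ n : ℕ in Filter.atTop, 1 + (n:ℝ)⁻¹ = ((n:ℝ)+1)/(n:ℝ) := by
    filter_upwards [Filter.eventually_ge_atTop 1] with n hn
    have hn0 : (n:ℝ) ≠ 0 := Nat.cast_ne_zero.2 (by omega)
    field_simp
  refine Filter.Tendsto.congr' h ?_
  simpa using tendsto_const_nhds.add (tendsto_inv_atTop_nhds_zero_nat (𝕜 := ℝ))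

lemma eLimsup_comp (T : X → X) (g : X → ℝ) (x : X) : eLimsup T g (T x) = eLimsup T g x := by
  have step1 : eLimsup T g (T x)
      = Filter.limsup (fun n => ((bAvg T g x (n+1) * (((n:ℝ)+1)/(n:ℝ)) : ℝ) : EReal))
          Filter.atTop := by
    apply limsup_coe_eq_of_sub
    have h : ∀ᶠ n : ℕ in Filter.atTop,
        bAvg T g (T x) n - bAvg T g x (n+1) * (((n:ℝ)+1)/(n:ℝ)) = -(g x) * (n:ℝ)⁻¹ := by
      filter_upwards [Filter.eventually_ge_atTop 1] with n hn
      rw [bAvg_comp_eq x hn]; ring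
    refine Filter.Tendsto.congr' (Filter.EventuallyEq.symm h) ?_
    simpa using tendsto_inv_atTop_nhds_zero_nat.const_mul (-(g x))
  have step2 : Filter.limsup (fun n => ((bAvg T g x (n+1) * (((n:ℝ)+1)/(n:ℝ)) : ℝ) : EReal))
      Filter.atTop = Filter.limsup (fun n => ((bAvg T g x (n+1) : ℝ) : EReal)) Filter.atTop :=
    limsup_coe_mul_eq tendsto_ratio
  have step3 : Filter.limsup (fun n => ((bAvg T g x (n+1) : ℝ) : EReal)) Filter.atTop
      = eLimsup T g x := by
    exact Filter.limsup_nat_add (fun n => ((bAvg T g x n : ℝ) : EReal)) 1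
  rw [step1, step2, step3]

lemma eLiminf_comp (T : X → X) (g : X → ℝ) (x : X) : eLiminf T g (T x) = eLiminf T g x := by
  have step1 : eLiminf T g (T x)
      = Filter.liminf (fun n => ((bAvg T g x (n+1) * (((n:ℝ)+1)/(n:ℝ)) : ℝ) : EReal))
          Filter.atTop := by
    apply liminf_coe_eq_of_sub
    have h : ∀ᶠ n : ℕ in Filter.atTop,
        bAvg T g (T x) n - bAvg T g x (n+1) * (((n:ℝ)+1)/(n:ℝ)) = -(g x) * (n:ℝ)⁻¹ := by
      filter_upwards [Filter.eventually_ge_atTop 1] with n hn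
      rw [bAvg_comp_eq x hn]; ring
    refine Filter.Tendsto.congr' (Filter.EventuallyEq.symm h) ?_
    simpa using tendsto_inv_atTop_nhds_zero_nat.const_mul (-(g x))
  have step2 : Filter.liminf (fun n => ((bAvg T g x (n+1) * (((n:ℝ)+1)/(n:ℝ)) : ℝ) : EReal))
      Filter.atTop = Filter.liminf (fun n => ((bAvg T g x (n+1) : ℝ) : EReal)) Filter.atTop :=
    liminf_coe_mul_eq tendsto_ratio
  have step3 : Filter.liminf (fun n => ((bAvg T g x (n+1) : ℝ) : EReal)) Filter.atTop
      = eLiminf T g x := by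
    exact Filter.liminf_nat_add (fun n => ((bAvg T g x n : ℝ) : EReal)) 1
  rw [step1, step2, step3]

/-- From `β < eLimsup` extract a positive Birkhoff sum of `g - β`. -/
lemma exists_pos_of_lt_eLimsup {x : X} {β : ℝ} (h : (β : EReal) < eLimsup T g x) :
    ∃ n, 0 < birkhoffSum T g n x - n * β := by
  have hfreq : ∃ᶠ n in Filter.atTop, (β : EReal) < ((bAvg T g x n : ℝ) : EReal) :=
    Filter.frequently_lt_of_lt_limsup (by isBoundedDefault) h
  obtain ⟨n, hn1, hn⟩ := (Filter.frequently_atTop.1 hfreq) 1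
  have hn' : β < bAvg T g x n := by exact_mod_cast hn
  have hnpos : (0:ℝ) < n := by exact_mod_cast hn1
  refine ⟨n, ?_⟩
  have : (n:ℝ) * β < (n:ℝ) * ((n:ℝ)⁻¹ * birkhoffSum T g n x) := by
    exact mul_lt_mul_of_pos_left hn' hnpos
  rw [← mul_assoc, mul_inv_cancel₀ (ne_of_gt hnpos), one_mul] at this
  linarith

lemma exists_pos_of_eLiminf_lt {x : X} {α : ℝ} (h : eLiminf T g x < (α : EReal)) :
    ∃ n, 0 < n * α - birkhoffSum T g n x := by
  have hfreq : ∃ᶠ n in Filter.atTop, ((bAvg T g x n : ℝ) : EReal) < (α : EReal) :=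
    Filter.frequently_lt_of_liminf_lt (by isBoundedDefault) h
  obtain ⟨n, hn1, hn⟩ := (Filter.frequently_atTop.1 hfreq) 1
  have hn' : bAvg T g x n < α := by exact_mod_cast hn
  have hnpos : (0:ℝ) < n := by exact_mod_cast hn1
  refine ⟨n, ?_⟩
  have : (n:ℝ) * ((n:ℝ)⁻¹ * birkhoffSum T g n x) < (n:ℝ) * α :=
    mul_lt_mul_of_pos_left hn' hnpos
  rw [← mul_assoc, mul_inv_cancel₀ (ne_of_gt hnpos), one_mul] at this
  linarith

end Dynamics
section AE
variable {X : Type*} [MeasurableSpace X] {T : X → X} {g : X → ℝ}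

theorem measure_cross_zero (m : Measure X) [IsFiniteMeasure m] (hT : MeasurePreserving T m m)
    (hgm : Measurable g) (hgi : Integrable g m) {α β : ℝ} (hαβ : α < β) :
    m {x | eLiminf T g x < (α : EReal) ∧ (β : EReal) < eLimsup T g x} = 0 := by
  set E := {x | eLiminf T g x < (α : EReal) ∧ (β : EReal) < eLimsup T g x} with hEdef
  have hEm : MeasurableSet E :=
    MeasurableSet.inter (measurable_eLiminf hT.measurable hgm measurableSet_Iio)
      (measurable_eLimsup hT.measurable hgm measurableSet_Ioi)
  have hEinv : T ⁻¹' E = E := by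
    ext x
    simp only [hEdef, Set.mem_preimage, Set.mem_setOf_eq, eLiminf_comp, eLimsup_comp]
  have hlow := key_lower m hT hEm hEinv hgm hgi β (Filter.Eventually.of_forall fun x hx => exists_pos_of_lt_eLimsup hx.2)
  have hup := key_upper m hT hEm hEinv hgm hgi α (Filter.Eventually.of_forall fun x hx => exists_pos_of_eLiminf_lt hx.1)
  have ht : (m E).toReal = 0 := by nlinarith [ENNReal.toReal_nonneg (a := m E)]
  exact (ENNReal.toReal_eq_zero_iff _).1 ht |>.resolve_right (measure_ne_top m E)

theorem measure_limsup_bot (m : Measure X) [IsFiniteMeasure m] (hT : MeasurePreserving T m m)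
    (hgm : Measurable g) (hgi : Integrable g m) :
    m {x | eLimsup T g x = ⊥} = 0 := by
  set E := {x | eLimsup T g x = ⊥} with hEdef
  have hEm : MeasurableSet E :=
    (measurable_eLimsup hT.measurable hgm) (measurableSet_singleton ⊥)
  have hEinv : T ⁻¹' E = E := by
    ext x
    simp only [hEdef, Set.mem_preimage, Set.mem_setOf_eq, eLimsup_comp]
  by_contra hne
  have htpos : 0 < (m E).toReal :=
    ENNReal.toReal_pos hne (measure_ne_top m E)
  have hup : ∀ α : ℝ, ∫ x in E, g x ∂m ≤ α * (m E).toReal := by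
    intro α
    refine key_upper m hT hEm hEinv hgm hgi α
      (Filter.Eventually.of_forall fun x hx => exists_pos_of_eLiminf_lt ?_)
    have h1 : eLiminf T g x ≤ eLimsup T g x := Filter.liminf_le_limsup
    have h2 : eLimsup T g x = ⊥ := hx
    rw [h2] at h1
    exact lt_of_le_of_lt h1 (by simp : (⊥:EReal) < (α:EReal))
  have := hup ((∫ x in E, g x ∂m - 1) / (m E).toReal)
  rw [div_mul_cancel₀ _ (ne_of_gt htpos)] at this
  linarith

theorem measure_liminf_top (m : Measure X) [IsFiniteMeasure m] (hT : MeasurePreserving T m m)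
    (hgm : Measurable g) (hgi : Integrable g m) :
    m {x | eLiminf T g x = ⊤} = 0 := by
  set E := {x | eLiminf T g x = ⊤} with hEdef
  have hEm : MeasurableSet E :=
    (measurable_eLiminf hT.measurable hgm) (measurableSet_singleton ⊤)
  have hEinv : T ⁻¹' E = E := by
    ext x
    simp only [hEdef, Set.mem_preimage, Set.mem_setOf_eq, eLiminf_comp]
  by_contra hne
  have htpos : 0 < (m E).toReal :=
    ENNReal.toReal_pos hne (measure_ne_top m E)
  have hlow : ∀ β : ℝ, β * (m E).toReal ≤ ∫ x in E, g x ∂m := by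
    intro β
    refine key_lower m hT hEm hEinv hgm hgi β
      (Filter.Eventually.of_forall fun x hx => exists_pos_of_lt_eLimsup ?_)
    have h1 : eLiminf T g x ≤ eLimsup T g x := Filter.liminf_le_limsup
    have h2 : eLiminf T g x = ⊤ := hx
    rw [h2] at h1
    exact lt_of_lt_of_le (by simp : (β:EReal) < (⊤:EReal)) h1
  have := hlow ((∫ x in E, g x ∂m + 1) / (m E).toReal)
  rw [div_mul_cancel₀ _ (ne_of_gt htpos)] at this
  linarith

/-- **Birkhoff**: a.e. the averages have a common finite `limsup = liminf`. -/
theorem birkhoff_ae (m : Measure X) [IsFiniteMeasure m] (hT : MeasurePreserving T m m)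
    (hgm : Measurable g) (hgi : Integrable g m) :
    ∀ᵐ x ∂m, eLiminf T g x = eLimsup T g x ∧ eLimsup T g x ≠ ⊥ ∧ eLiminf T g x ≠ ⊤ := by
  have h1 : ∀ᵐ x ∂m, ∀ q : ℚ, ∀ r : ℚ,
      ¬(eLiminf T g x < ((q:ℝ) : EReal) ∧ (((r:ℝ)) : EReal) < eLimsup T g x ∧ q < r) := by
    rw [ae_all_iff]
    intro q
    rw [ae_all_iff]
    intro r
    by_cases hqr : q < r
    · have := measure_cross_zero m hT hgm hgi (show (q:ℝ) < (r:ℝ) by exact_mod_cast hqr)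
      rw [ae_iff]
      have hset : {x | ¬ ¬(eLiminf T g x < ((q:ℝ) : EReal) ∧ (((r:ℝ)) : EReal) < eLimsup T g x
          ∧ q < r)} = {x | eLiminf T g x < ((q:ℝ) : EReal) ∧ (((r:ℝ)) : EReal) < eLimsup T g x}
          := by
        ext x
        simp [not_not, hqr]
      rw [hset]
      exact this
    · exact Filter.Eventually.of_forall fun x h => hqr h.2.2
  have h2 : ∀ᵐ x ∂m, ¬ (eLimsup T g x = ⊥) := by
    rw [ae_iff]
    simpa using measure_limsup_bot m hT hgm hgi
  have h3 : ∀ᵐ x ∂m, ¬ (eLiminf T g x = ⊤) := by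
    rw [ae_iff]
    simpa using measure_liminf_top m hT hgm hgi
  filter_upwards [h1, h2, h3] with x hx1 hx2 hx3
  refine ⟨?_, hx2, hx3⟩
  refine le_antisymm Filter.liminf_le_limsup ?_
  by_contra hlt
  push_neg at hlt
  obtain ⟨y, hy1, hy2⟩ := EReal.exists_between_coe_real hlt
  obtain ⟨y', hy1', hy2'⟩ := EReal.exists_between_coe_real hy1
  have hy2'' : y' < y := by exact_mod_cast hy2'
  obtain ⟨q, hq1, hq2⟩ := exists_rat_btwn hy2''
  obtain ⟨r, hr1, hr2⟩ := exists_rat_btwn hq2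
  refine hx1 q r ⟨?_, ?_, ?_⟩
  · exact lt_trans hy1' (by exact_mod_cast hq1)
  · exact lt_trans (show (((r:ℝ)):EReal) < (y:EReal) by exact_mod_cast hr2) hy2
  · exact_mod_cast hr1

/-- Extract the real limit on the good set. -/
lemma tendsto_bAvg_of_good {x : X} (h1 : eLiminf T g x = eLimsup T g x)
    (h2 : eLimsup T g x ≠ ⊥) (h3 : eLiminf T g x ≠ ⊤) :
    ∃ r : ℝ, eLimsup T g x = (r : EReal) ∧
      Filter.Tendsto (fun n => bAvg T g x n) Filter.atTop (nhds r) := by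
  have h4 : eLimsup T g x ≠ ⊤ := h1 ▸ h3
  obtain ⟨r, hr⟩ : ∃ r : ℝ, eLimsup T g x = (r : EReal) := by
    cases hL : eLimsup T g x with
    | bot => exact absurd hL h2
    | top => exact absurd hL h4
    | coe r => exact ⟨r, rfl⟩
  refine ⟨r, hr, ?_⟩
  have : Filter.Tendsto (fun n => ((bAvg T g x n : ℝ) : EReal)) Filter.atTop (nhds (r : EReal)) :=
    tendsto_of_liminf_eq_limsup (show eLiminf T g x = (r:EReal) by rw [h1]; exact hr)
      (show eLimsup T g x = (r:EReal) from hr) (by isBoundedDefault) (by isBoundedDefault)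
  exact EReal.tendsto_coe.1 this

/-- Conversely, convergence determines `eLimsup` and `eLiminf`. -/
lemma eLimsup_of_tendsto {x : X} {r : ℝ}
    (h : Filter.Tendsto (fun n => bAvg T g x n) Filter.atTop (nhds r)) :
    eLimsup T g x = (r : EReal) ∧ eLiminf T g x = (r : EReal) := by
  have h' : Filter.Tendsto (fun n => ((bAvg T g x n : ℝ) : EReal)) Filter.atTop
      (nhds (r : EReal)) := EReal.tendsto_coe.2 h
  exact ⟨h'.limsup_eq, h'.liminf_eq⟩

end AE

section Final
variable {X : Type*} [MeasurableSpace X]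

lemma birkhoffSum_mul_phase (S : X → X) (g : X → ℝ) (N n : ℕ) (x : X) :
    birkhoffSum S g (n * N) x
      = ∑ j ∈ Finset.range N, birkhoffSum (S^[N]) g n (S^[j] x) := by
  induction n with
  | zero => simp [birkhoffSum]
  | succ n ih =>
    have h1 : (n + 1) * N = n * N + N := by ring
    rw [h1, birkhoffSum_add, ih]
    simp only [birkhoffSum_succ]
    rw [Finset.sum_add_distrib]
    congr 1
    apply Finset.sum_congr rfl
    intro j _
    congr 1
    rw [← Function.iterate_mul, ← Function.iterate_add_apply, ← Function.iterate_add_apply]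
    congr 1
    ring

lemma ae_comp_iterate {m : Measure X} {f : X → X} (hf : MeasurePreserving f m m)
    {P : X → Prop} (h : ∀ᵐ y ∂m, P y) : ∀ᵐ x ∂m, P (f x) := by
  rw [← hf.map_eq] at h
  exact ae_of_ae_map hf.aemeasurable h

end Final


/-- For an ergodic measure-preserving `S` and an integrable `g` with
`∫ g dm < -c`, there is a set `A` of measure at least `1/N`, invariant mod `m` under
`S^N`, on which the Birkhoff averages of `g` along `S^N` converge a.e. to a limit
smaller than `-c`. -/
theorem exists_pow_invariant_set_with_birkhoff_limit_lt
    {X : Type*} [MeasurableSpace X] (m : Measure X) [IsProbabilityMeasure m]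
    (S : X → X) (hS : Ergodic S m) (N : ℕ) (hN : 1 ≤ N)
    (c : ℝ) (hc : 0 < c) (g : X → ℝ) (hg : Integrable g m)
    (hint : ∫ x, g x ∂m < -c) :
    ∃ A : Set X, MeasurableSet A ∧ 1 / (N : ℝ≥0∞) ≤ m A ∧
      m (A ∆ ((S^[N]) ⁻¹' A)) = 0 ∧
      ∀ᵐ x ∂m, x ∈ A →
        ∃ l, Tendsto (fun n : ℕ => (n : ℝ)⁻¹ * ∑ i ∈ Finset.range n, g ((S^[N])^[i] x))
            atTop (nhds l) ∧ l < -c := by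
  classical
  have hSmp : MeasurePreserving S m m := hS.toMeasurePreserving
  have hSmeas : Measurable S := hSmp.measurable
  -- measurable representative of g
  obtain ⟨g', hg'sm, hgg'⟩ : ∃ g' : X → ℝ, Measurable g' ∧ g =ᵐ[m] g' :=
    ⟨hg.1.mk g, hg.1.stronglyMeasurable_mk.measurable, hg.1.ae_eq_mk⟩
  have hg'int : Integrable g' m := hg.congr hgg'
  have hintg' : ∫ x, g' x ∂m < -c := by
    rwa [integral_congr_ae hgg'] at hint
  set T : X → X := S^[N] with hTdef
  have hTmp : MeasurePreserving T m m := hSmp.iterate N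
  -- the candidate set
  set A : Set X := {x | eLiminf T g' x = eLimsup T g' x ∧ (⊥ : EReal) < eLimsup T g' x ∧
      eLimsup T g' x < ((-c : ℝ) : EReal)} with hAdef
  have hAm : MeasurableSet A := by
    have hAeq : A = ({x | eLiminf T g' x ≤ eLimsup T g' x} ∩ {x | eLimsup T g' x ≤ eLiminf T g' x})
        ∩ ({x | (⊥:EReal) < eLimsup T g' x} ∩ {x | eLimsup T g' x < ((-c : ℝ) : EReal)}) := by
      ext x
      simp only [hAdef, Set.mem_inter_iff, Set.mem_setOf_eq]
      constructor
      · rintro ⟨h1, h2, h3⟩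
        exact ⟨⟨h1.le, h1.ge⟩, h2, h3⟩
      · rintro ⟨⟨h1, h1'⟩, h2, h3⟩
        exact ⟨le_antisymm h1 h1', h2, h3⟩
    rw [hAeq]
    exact (MeasurableSet.inter
        (measurableSet_le (measurable_eLiminf hTmp.measurable hg'sm)
          (measurable_eLimsup hTmp.measurable hg'sm))
        (measurableSet_le (measurable_eLimsup hTmp.measurable hg'sm)
          (measurable_eLiminf hTmp.measurable hg'sm))).inter
      ((measurable_eLimsup hTmp.measurable hg'sm measurableSet_Ioi).inter
        (measurable_eLimsup hTmp.measurable hg'sm measurableSet_Iio))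
  have hAinv : T ⁻¹' A = A := by
    ext x
    simp only [hAdef, Set.mem_preimage, Set.mem_setOf_eq, eLimsup_comp, eLiminf_comp]
  -- membership in A gives convergence (for g')
  have hAconv : ∀ x ∈ A, ∃ r : ℝ, r < -c ∧
      Filter.Tendsto (fun n => bAvg T g' x n) Filter.atTop (nhds r) := by
    rintro x ⟨h1, h2, h3⟩
    obtain ⟨r, hr, htend⟩ := tendsto_bAvg_of_good h1 h2.ne'
      (by rw [h1]; exact ne_top_of_lt h3)
    refine ⟨r, ?_, htend⟩
    rw [hr] at h3
    exact_mod_cast h3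
  -- agreement set for g and g'
  have hD : ∀ᵐ x ∂m, ∀ k : ℕ, g (S^[k] x) = g' (S^[k] x) := by
    rw [ae_all_iff]
    intro k
    exact ae_comp_iterate (hSmp.iterate k) hgg'
  ------------------------------------------------------------------
  -- the ergodic average along S is a.e. a constant `a`
  ------------------------------------------------------------------
  have hbkS := birkhoff_ae m hSmp hg'sm hg'int
  obtain ⟨c₀, hc₀⟩ := hS.toPreErgodic.ae_eq_const_of_ae_eq_comp
    (measurable_eLimsup hSmeas hg'sm) (funext fun x => eLimsup_comp S g' x)
  haveI : (ae m).NeBot := ae_neBot.2 (IsProbabilityMeasure.ne_zero m)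
  obtain ⟨x₀, hx₀good, hx₀c⟩ := (hbkS.and hc₀).exists
  obtain ⟨a, hac₀, -⟩ := tendsto_bAvg_of_good hx₀good.1 hx₀good.2.1 hx₀good.2.2
  rw [hx₀c] at hac₀
  -- a.e. convergence of S-averages to a
  have hconv : ∀ᵐ x ∂m, Filter.Tendsto (fun n => bAvg S g' x n) Filter.atTop (nhds a) := by
    filter_upwards [hbkS, hc₀] with x hx hxc
    obtain ⟨r, hr, htend⟩ := tendsto_bAvg_of_good hx.1 hx.2.1 hx.2.2
    have : ((r : ℝ) : EReal) = ((a : ℝ) : EReal) := by rw [← hr, hxc]; exact hac₀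
    rwa [show r = a by exact_mod_cast this] at htend
  -- the constant is < -c
  have ha : a < -c := by
    by_contra hna
    push_neg at hna
    set β : ℝ := ((∫ x, g' x ∂m) + -c) / 2 with hβ
    have hβ1 : ∫ x, g' x ∂m < β := by rw [hβ]; linarith
    have hβ2 : β < -c := by rw [hβ]; linarith
    have hβa : β < a := lt_of_lt_of_le hβ2 hna
    have hkey := key_lower m hSmp MeasurableSet.univ (Set.preimage_univ) hg'sm hg'int β
      (by
        filter_upwards [hconv] with x hx _
        have hev : ∀ᶠ n in Filter.atTop, β < bAvg S g' x n := hx.eventually (eventually_gt_nhds hβa)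
        obtain ⟨n, hn1, hn⟩ := (Filter.frequently_atTop.1 hev.frequently) 1
        have hnpos : (0:ℝ) < n := by exact_mod_cast hn1
        refine ⟨n, ?_⟩
        have : (n:ℝ) * β < (n:ℝ) * ((n:ℝ)⁻¹ * birkhoffSum S g' n x) :=
          mul_lt_mul_of_pos_left hn hnpos
        rw [← mul_assoc, mul_inv_cancel₀ (ne_of_gt hnpos), one_mul] at this
        linarith)
    rw [Measure.restrict_univ] at hkey
    simp only [measure_univ, ENNReal.toReal_one, mul_one] at hkey
    linarith
  ------------------------------------------------------------------
  -- a.e. each phase of the `T`-averages converges; cover by translates of A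
  ------------------------------------------------------------------
  have hbkT := birkhoff_ae m hTmp hg'sm hg'int
  have hphase : ∀ᵐ x ∂m, ∀ j : ℕ,
      eLiminf T g' (S^[j] x) = eLimsup T g' (S^[j] x) ∧ eLimsup T g' (S^[j] x) ≠ ⊥ ∧
        eLiminf T g' (S^[j] x) ≠ ⊤ := by
    rw [ae_all_iff]
    intro j
    exact ae_comp_iterate (hSmp.iterate j) hbkT
  have hcover : ∀ᵐ x ∂m, ∃ j, j < N ∧ S^[j] x ∈ A := by
    filter_upwards [hconv, hphase] with x hx hph
    have h1 : ∀ j : ℕ, ∃ r : ℝ, eLimsup T g' (S^[j] x) = (r : EReal) ∧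
        Filter.Tendsto (fun n => bAvg T g' (S^[j] x) n) Filter.atTop (nhds r) := fun j =>
      tendsto_bAvg_of_good (hph j).1 (hph j).2.1 (hph j).2.2
    choose r hr1 hr2 using h1
    -- subsequence identity
    have hNpos : (0:ℝ) < N := by exact_mod_cast hN
    have heq : ∀ n : ℕ, bAvg S g' x (n * N)
        = (N:ℝ)⁻¹ * ∑ j ∈ Finset.range N, bAvg T g' (S^[j] x) n := by
      intro n
      simp only [bAvg, birkhoffSum_mul_phase S g' N n x, Nat.cast_mul, mul_inv,
        Finset.mul_sum]
      apply Finset.sum_congr rfl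
      intro j _
      ring
    have htends1 : Filter.Tendsto (fun n : ℕ => bAvg S g' x (n * N)) Filter.atTop (nhds a) :=
      hx.comp (Filter.tendsto_atTop_mono (fun n => Nat.le_mul_of_pos_right n (by omega))
        Filter.tendsto_id)
    have htends2 : Filter.Tendsto (fun n : ℕ => bAvg S g' x (n * N)) Filter.atTop
        (nhds ((N:ℝ)⁻¹ * ∑ j ∈ Finset.range N, r j)) := by
      rw [show (fun n : ℕ => bAvg S g' x (n * N))
          = fun n => (N:ℝ)⁻¹ * ∑ j ∈ Finset.range N, bAvg T g' (S^[j] x) n from funext heq]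
      exact (tendsto_finset_sum _ fun j _ => hr2 j).const_mul _
    have ha_eq : a = (N:ℝ)⁻¹ * ∑ j ∈ Finset.range N, r j :=
      tendsto_nhds_unique htends1 htends2
    have hjlt : ∃ j ∈ Finset.range N, r j < -c := by
      by_contra hcon
      push_neg at hcon
      have hsum : (N:ℝ) * (-c) ≤ ∑ j ∈ Finset.range N, r j := by
        calc (N:ℝ) * (-c) = ∑ _j ∈ Finset.range N, (-c) := by
              rw [Finset.sum_const, Finset.card_range, nsmul_eq_mul]
        _ ≤ ∑ j ∈ Finset.range N, r j := Finset.sum_le_sum fun j hj => hcon j hj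
      have hfin : -c ≤ a := by
        rw [ha_eq]
        have h2 : (N:ℝ)⁻¹ * ((N:ℝ) * (-c)) ≤ (N:ℝ)⁻¹ * ∑ j ∈ Finset.range N, r j :=
          mul_le_mul_of_nonneg_left hsum (by positivity)
        rw [← mul_assoc, inv_mul_cancel₀ (ne_of_gt hNpos), one_mul] at h2
        exact h2
      linarith
    obtain ⟨j, hj, hjr⟩ := hjlt
    refine ⟨j, Finset.mem_range.1 hj, ?_, ?_, ?_⟩
    · rw [(eLimsup_of_tendsto (hr2 j)).1, (eLimsup_of_tendsto (hr2 j)).2]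
    · rw [(eLimsup_of_tendsto (hr2 j)).1]
      exact EReal.bot_lt_coe _
    · rw [(eLimsup_of_tendsto (hr2 j)).1]
      exact_mod_cast hjr
  ------------------------------------------------------------------
  -- measure bound
  ------------------------------------------------------------------
  have hUm : MeasurableSet (⋃ j ∈ Finset.range N, S^[j] ⁻¹' A) :=
    MeasurableSet.biUnion (Finset.countable_toSet _) fun j _ =>
      (hSmeas.iterate j) hAm
  have hU1 : m (⋃ j ∈ Finset.range N, S^[j] ⁻¹' A) = 1 := by
    have hae : ∀ᵐ x ∂m, x ∈ ⋃ j ∈ Finset.range N, S^[j] ⁻¹' A := by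
      filter_upwards [hcover] with x hx
      obtain ⟨j, hj, hxj⟩ := hx
      exact Set.mem_biUnion (Finset.mem_range.2 hj) hxj
    rw [← prob_compl_eq_zero_iff hUm]
    exact ae_iff.mp hae
  have hmA : (1:ℝ≥0∞) ≤ N * m A := by
    have hle := measure_biUnion_finset_le (μ := m) (Finset.range N) (fun j => S^[j] ⁻¹' A)
    have hpre : ∀ j, m (S^[j] ⁻¹' A) = m A := fun j =>
      (hSmp.iterate j).measure_preimage hAm.nullMeasurableSet
    calc (1:ℝ≥0∞) = m (⋃ j ∈ Finset.range N, S^[j] ⁻¹' A) := hU1.symm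
    _ ≤ ∑ j ∈ Finset.range N, m (S^[j] ⁻¹' A) := hle
    _ = ∑ _j ∈ Finset.range N, m A := Finset.sum_congr rfl fun j _ => hpre j
    _ = N * m A := by rw [Finset.sum_const, Finset.card_range, nsmul_eq_mul]
  refine ⟨A, hAm, ?_, ?_, ?_⟩
  · rw [ENNReal.div_le_iff_le_mul
      (Or.inl (show (N:ℝ≥0∞) ≠ 0 by exact_mod_cast Nat.one_le_iff_ne_zero.1 hN))
      (Or.inl (ENNReal.natCast_ne_top N))]
    rwa [mul_comm] at hmA
  · rw [hAinv]
    simp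
  · filter_upwards [hD] with x hxD hxA
    obtain ⟨r, hrc, htend⟩ := hAconv x hxA
    refine ⟨r, ?_, hrc⟩
    have hagree : ∀ n, bAvg T g' x n = (n:ℝ)⁻¹ * ∑ i ∈ Finset.range n, g ((S^[N])^[i] x) := by
      intro n
      simp only [bAvg, birkhoffSum]
      congr 1
      apply Finset.sum_congr rfl
      intro i _
      rw [← Function.iterate_mul]
      exact (hxD (N * i)).symm
    rw [show (fun n : ℕ => (n:ℝ)⁻¹ * ∑ i ∈ Finset.range n, g ((S^[N])^[i] x))
        = fun n => bAvg T g' x n from funext fun n => (hagree n).symm]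
    exact htend
end

section
/- Let (a_j)_{j≥1} be a sequence of real numbers, H ∈ ℝ with a_j ≤ H for all j, and let a₀, c₁ be real numbers with 0 < c₁ < a₀ and limsup_{n→∞} (1/n) Σ_{j=1}^{n} a_j ≥ a₀. Call an integer n ≥ 1 a c₁-hyperbolic time for the sequence if Σ_{j=n−k+1}^{n} a_j ≥ c₁·k for every k with 1 ≤ k ≤ n. Then limsup_{n→∞} (1/n)·#{1 ≤ m ≤ n : m is a c₁-hyperbolic time} ≥ (a₀ − c₁)/(H − c₁). -/
open Filter Set

open scoped Classical in
private noncomputable def plissCount (a : ℕ → ℝ) (c₁ : ℝ) (n : ℕ) : ℕ :=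
  ((Finset.Icc 1 n).filter (fun m => ∀ m' < m,
    (∑ j ∈ Finset.Icc 1 m', (a j - c₁)) ≤ ∑ j ∈ Finset.Icc 1 m, (a j - c₁))).card

private lemma pliss_S_split (b : ℕ → ℝ) {m' m : ℕ} (h : m' ≤ m) :
    ∑ j ∈ Finset.Icc 1 m, b j
      = (∑ j ∈ Finset.Icc 1 m', b j) + ∑ j ∈ Finset.Ioc m' m, b j := by
  have e1 : Finset.Icc 1 m = Finset.Ioc 0 m := Finset.Icc_add_one_left_eq_Ioc 0 m
  have e2 : Finset.Icc 1 m' = Finset.Ioc 0 m' := Finset.Icc_add_one_left_eq_Ioc 0 m'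
  rw [e1, e2]
  exact (Finset.sum_Ioc_consecutive b (Nat.zero_le m') h).symm

private lemma pliss_hyp_iff (a : ℕ → ℝ) (c₁ : ℝ) {m : ℕ} (hm : 1 ≤ m) :
    (∀ k, 1 ≤ k → k ≤ m → c₁ * k ≤ ∑ j ∈ Finset.Icc (m - k + 1) m, a j) ↔
    (∀ m' < m, (∑ j ∈ Finset.Icc 1 m', (a j - c₁)) ≤ ∑ j ∈ Finset.Icc 1 m, (a j - c₁)) := by
  have key : ∀ m' < m,
      ((∑ j ∈ Finset.Icc 1 m, (a j - c₁)) - ∑ j ∈ Finset.Icc 1 m', (a j - c₁))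
        = (∑ j ∈ Finset.Icc (m' + 1) m, a j) - c₁ * (m - m' : ℕ) := by
    intro m' hm'
    have h1 : Finset.Icc (m' + 1) m = Finset.Ioc m' m := Finset.Icc_add_one_left_eq_Ioc m' m
    have h2 : ∑ j ∈ Finset.Ioc m' m, (a j - c₁)
        = (∑ j ∈ Finset.Ioc m' m, a j) - c₁ * (m - m' : ℕ) := by
      rw [Finset.sum_sub_distrib, Finset.sum_const, Nat.card_Ioc, nsmul_eq_mul]; ring
    rw [pliss_S_split (fun j => a j - c₁) hm'.le, h1, h2]
    ring
  constructor
  · intro h m' hm'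
    have hk : 1 ≤ m - m' := by omega
    have h2 := h (m - m') hk (Nat.sub_le m m')
    have hmk : m - (m - m') = m' := by omega
    rw [hmk] at h2
    have h3 := key m' hm'
    linarith
  · intro h k hk1 hk2
    have hm' : m - k < m := by omega
    have h2 := h (m - k) hm'
    have hkey := key (m - k) hm'
    have h1 : m - (m - k) = k := by omega
    rw [h1] at hkey
    linarith

open scoped Classical in
private lemma pliss_key_bound (a : ℕ → ℝ) (c₁ H : ℝ) (hH : ∀ j, 1 ≤ j → a j ≤ H)
    (hHc : c₁ ≤ H) :
    ∀ n : ℕ, ∀ m ≤ n,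
      (∑ j ∈ Finset.Icc 1 m, (a j - c₁)) ≤ (plissCount a c₁ n : ℝ) * (H - c₁) := by
  intro n
  induction n with
  | zero =>
    intro m hm
    interval_cases m
    simp [plissCount]
  | succ n ih =>
    have hmono : (plissCount a c₁ n : ℝ) ≤ plissCount a c₁ (n + 1) := by
      exact_mod_cast Finset.card_le_card (Finset.filter_subset_filter _
          (Finset.Icc_subset_Icc_right (Nat.le_succ n)))
    have hHc' : (0:ℝ) ≤ H - c₁ := by linarith
    intro m hm
    by_cases h : m ≤ n
    · exact (ih m h).trans (mul_le_mul_of_nonneg_right hmono hHc')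
    · have hm1 : m = n + 1 := by omega
      subst hm1
      by_cases hp : ∀ m' < n + 1,
          (∑ j ∈ Finset.Icc 1 m', (a j - c₁)) ≤ ∑ j ∈ Finset.Icc 1 (n + 1), (a j - c₁)
      · -- record: count increases
        have hmem : (n + 1) ∈ (Finset.Icc 1 (n + 1)).filter (fun m => ∀ m' < m,
            (∑ j ∈ Finset.Icc 1 m', (a j - c₁)) ≤ ∑ j ∈ Finset.Icc 1 m, (a j - c₁)) := by
          simp only [Finset.mem_filter, Finset.mem_Icc]
          exact ⟨⟨Nat.one_le_iff_ne_zero.mpr (Nat.succ_ne_zero n), le_refl _⟩, hp⟩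
        have hsub : insert (n + 1) ((Finset.Icc 1 n).filter (fun m => ∀ m' < m,
            (∑ j ∈ Finset.Icc 1 m', (a j - c₁)) ≤ ∑ j ∈ Finset.Icc 1 m, (a j - c₁)))
            ⊆ (Finset.Icc 1 (n + 1)).filter (fun m => ∀ m' < m,
            (∑ j ∈ Finset.Icc 1 m', (a j - c₁)) ≤ ∑ j ∈ Finset.Icc 1 m, (a j - c₁)) := by
          intro x hx
          rcases Finset.mem_insert.mp hx with rfl | hx
          · exact hmem
          · exact Finset.filter_subset_filter _
              (Finset.Icc_subset_Icc_right (Nat.le_succ n)) hx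
        have hnotmem : (n + 1) ∉ (Finset.Icc 1 n).filter (fun m => ∀ m' < m,
            (∑ j ∈ Finset.Icc 1 m', (a j - c₁)) ≤ ∑ j ∈ Finset.Icc 1 m, (a j - c₁)) := by
          simp only [Finset.mem_filter, Finset.mem_Icc]
          omega
        have hcard : plissCount a c₁ n + 1 ≤ plissCount a c₁ (n + 1) := by
          have := Finset.card_le_card hsub
          rwa [Finset.card_insert_of_notMem hnotmem] at this
        have hcard' : (plissCount a c₁ n : ℝ) + 1 ≤ plissCount a c₁ (n + 1) := by
          exact_mod_cast hcard
        have hsum : (∑ j ∈ Finset.Icc 1 (n + 1), (a j - c₁))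
            = (∑ j ∈ Finset.Icc 1 n, (a j - c₁)) + (a (n + 1) - c₁) :=
          Finset.sum_Icc_succ_top (Nat.one_le_iff_ne_zero.mpr (Nat.succ_ne_zero n)) _
        have hSn := ih n le_rfl
        have han : a (n + 1) ≤ H := hH (n + 1) (Nat.one_le_iff_ne_zero.mpr (Nat.succ_ne_zero n))
        nlinarith [mul_le_mul_of_nonneg_right hcard' hHc']
      · push_neg at hp
        obtain ⟨m', hm', hlt⟩ := hp
        have h2 := ih m' (by omega)
        calc (∑ j ∈ Finset.Icc 1 (n + 1), (a j - c₁))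
            ≤ (∑ j ∈ Finset.Icc 1 m', (a j - c₁)) := hlt.le
          _ ≤ (plissCount a c₁ n : ℝ) * (H - c₁) := h2
          _ ≤ _ := mul_le_mul_of_nonneg_right hmono hHc'

private lemma pliss_le_of_eventual_bound {g : ℕ → ℝ} {a₀ x : ℝ} (ha : 0 < a₀)
    (h : a₀ ≤ limsup g atTop) (hx : ∀ᶠ n in atTop, g n ≤ x) : a₀ ≤ x := by
  rw [limsup_eq] at h
  by_cases hb : BddBelow {b : ℝ | ∀ᶠ n in atTop, g n ≤ b}
  · exact h.trans (csInf_le hb hx)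
  · rw [Real.sInf_of_not_bddBelow hb] at h
    linarith

/-- Pliss-type lemma. If `a_j ≤ H` for all `j ≥ 1`, `0 < c₁ < a₀` and the
averages `(1/n) Σ_{j=1}^n a_j` have limsup at least `a₀`, then the frequency of
`c₁`-hyperbolic times (times `n` with `Σ_{j=n-k+1}^n a_j ≥ c₁ k` for all `1 ≤ k ≤ n`)
has limsup at least `(a₀ - c₁)/(H - c₁)`. -/
theorem pliss_frequency_of_hyperbolic_times
    (a : ℕ → ℝ) (H a₀ c₁ : ℝ) (hH : ∀ j, 1 ≤ j → a j ≤ H)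
    (hc₁ : 0 < c₁) (hca : c₁ < a₀)
    (hlimsup : a₀ ≤ limsup (fun n : ℕ => (∑ j ∈ Finset.Icc 1 n, a j) / n) atTop) :
    (a₀ - c₁) / (H - c₁) ≤
      limsup (fun n : ℕ =>
        (({m | 1 ≤ m ∧ m ≤ n ∧ ∀ k, 1 ≤ k → k ≤ m →
          c₁ * k ≤ ∑ j ∈ Finset.Icc (m - k + 1) m, a j}).ncard : ℝ) / n) atTop := by
  classical
  set g : ℕ → ℝ := fun n => (∑ j ∈ Finset.Icc 1 n, a j) / n with hg
  have ha₀ : 0 < a₀ := hc₁.trans hca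
  -- H ≥ a₀
  have hgH : ∀ᶠ n in atTop, g n ≤ H := by
    filter_upwards [eventually_ge_atTop 1] with n hn
    have hsum : (∑ j ∈ Finset.Icc 1 n, a j) ≤ n * H := by
      calc (∑ j ∈ Finset.Icc 1 n, a j) ≤ ∑ j ∈ Finset.Icc 1 n, H :=
            Finset.sum_le_sum (fun j hj => hH j (Finset.mem_Icc.mp hj).1)
        _ = n * H := by rw [Finset.sum_const, Nat.card_Icc]; simp [nsmul_eq_mul]
    rw [hg]
    rw [div_le_iff₀ (by positivity : (0:ℝ) < n)]
    linarith
  have hHa₀ : a₀ ≤ H := pliss_le_of_eventual_bound ha₀ hlimsup hgH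
  have hHc : (0:ℝ) < H - c₁ := by linarith
  -- identify the set count with plissCount
  have hset : ∀ n : ℕ, (({m | 1 ≤ m ∧ m ≤ n ∧ ∀ k, 1 ≤ k → k ≤ m →
      c₁ * k ≤ ∑ j ∈ Finset.Icc (m - k + 1) m, a j}).ncard : ℝ) = plissCount a c₁ n := by
    intro n
    have : {m | 1 ≤ m ∧ m ≤ n ∧ ∀ k, 1 ≤ k → k ≤ m →
        c₁ * k ≤ ∑ j ∈ Finset.Icc (m - k + 1) m, a j}
        = ↑((Finset.Icc 1 n).filter (fun m => ∀ m' < m,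
          (∑ j ∈ Finset.Icc 1 m', (a j - c₁)) ≤ ∑ j ∈ Finset.Icc 1 m, (a j - c₁))) := by
      ext m
      simp only [Set.mem_setOf_eq, Finset.coe_filter, Finset.mem_Icc]
      constructor
      · rintro ⟨h1, h2, h3⟩
        exact ⟨⟨h1, h2⟩, (pliss_hyp_iff a c₁ h1).mp h3⟩
      · rintro ⟨⟨h1, h2⟩, h3⟩
        exact ⟨h1, h2, (pliss_hyp_iff a c₁ h1).mpr h3⟩
    rw [this, Set.ncard_coe_finset]
    rfl
  set f : ℕ → ℝ := fun n =>
    (({m | 1 ≤ m ∧ m ≤ n ∧ ∀ k, 1 ≤ k → k ≤ m →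
      c₁ * k ≤ ∑ j ∈ Finset.Icc (m - k + 1) m, a j}).ncard : ℝ) / n with hf
  -- the set of eventual upper bounds of f
  rw [limsup_eq]
  apply le_csInf
  · refine ⟨1, ?_⟩
    simp only [Set.mem_setOf_eq]
    filter_upwards [eventually_ge_atTop 1] with n hn
    rw [hf]
    simp only
    rw [hset n, div_le_one (by positivity : (0:ℝ) < n)]
    have : plissCount a c₁ n ≤ n := by
      calc plissCount a c₁ n ≤ (Finset.Icc 1 n).card := Finset.card_filter_le _ _
        _ = n := by rw [Nat.card_Icc]; omega
    exact_mod_cast this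
  · intro b hb
    simp only [Set.mem_setOf_eq] at hb
    -- from f ≤ b eventually, derive g ≤ c₁ + b * (H - c₁) eventually
    have hgb : ∀ᶠ n in atTop, g n ≤ c₁ + b * (H - c₁) := by
      filter_upwards [hb, eventually_ge_atTop 1] with n hfb hn
      have hkey := pliss_key_bound a c₁ H hH (by linarith) n n le_rfl
      rw [Finset.sum_sub_distrib, Finset.sum_const, Nat.card_Icc] at hkey
      have hn' : (0:ℝ) < n := by positivity
      have hfb' : (plissCount a c₁ n : ℝ) / n ≤ b := by
        rw [hf] at hfb; simp only at hfb; rwa [hset n] at hfb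
      have hCn : (plissCount a c₁ n : ℝ) ≤ b * n := by
        rw [div_le_iff₀ hn'] at hfb'; linarith
      simp only [Nat.add_sub_cancel, nsmul_eq_mul] at hkey
      -- hkey : ∑ a - n * c₁ ≤ plissCount * (H - c₁)
      have h2 : (∑ j ∈ Finset.Icc 1 n, a j) ≤ n * c₁ + b * n * (H - c₁) := by
        nlinarith [mul_le_mul_of_nonneg_right hCn hHc.le]
      rw [hg]
      rw [div_le_iff₀ hn']
      nlinarith
    have := pliss_le_of_eventual_bound ha₀ hlimsup hgb
    rw [div_le_iff₀ hHc]
    linarith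
end

section
/- Let M be a compact metric space without isolated points and f : M → M a continuous map admitting a point q ∈ M whose forward orbit {f^n(q) : n ≥ 0} is dense in M. Then for every ε > 0 and every nonempty open set B ⊆ M there exist a point p ∈ B and an integer N₀ ≥ 0 such that the set ⋃_{j=0}^{N₀} f^{−j}({p}) is ε-dense in M, i.e. for every x ∈ M there are 0 ≤ j ≤ N₀ and y ∈ M with f^j(y) = p and dist(x, y) < ε. -/
open Filter Set Topology

/-- If `M` is a compact metric space without isolated points and `f` is a
continuous map with a dense forward orbit, then for every `ε > 0` and every nonempty
open set `B` there are `p ∈ B` and `N₀` such that `⋃_{j ≤ N₀} f^{-j}{p}` is `ε`-dense. -/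
theorem preimages_eps_dense_of_dense_orbit
    {M : Type*} [MetricSpace M] [CompactSpace M]
    (hM : ∀ x : M, (nhdsWithin x {x}ᶜ).NeBot)
    (f : M → M) (hf : Continuous f) (q : M)
    (hq : Dense (Set.range fun n : ℕ => f^[n] q)) :
    ∀ ε > (0 : ℝ), ∀ B : Set M, IsOpen B → B.Nonempty →
      ∃ p ∈ B, ∃ N₀ : ℕ, ∀ x : M, ∃ j ≤ N₀, ∃ y : M, f^[j] y = p ∧ dist x y < ε := by
  intro ε hε B hB hBne
  haveI : ∀ x : M, NeBot (𝓝[≠] x) := hM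
  -- cover M by ε-balls around orbit points
  have hcov : (Set.univ : Set M) ⊆ ⋃ m : ℕ, Metric.ball (f^[m] q) ε := by
    intro x _
    obtain ⟨y, hy, m, rfl⟩ := Metric.dense_iff.mp hq x ε hε
    exact Set.mem_iUnion.mpr ⟨m, Metric.mem_ball'.mp hy⟩
  obtain ⟨S, hS⟩ := isCompact_univ.elim_finite_subcover
    (fun m : ℕ => Metric.ball (f^[m] q) ε) (fun m => Metric.isOpen_ball) hcov
  set N : ℕ := S.sup id with hN
  -- the tail orbit is dense
  have htail : Dense ((Set.range fun n : ℕ => f^[n] q) \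
      ((fun n : ℕ => f^[n] q) '' {n | n < N})) :=
    hq.diff_finite ((Set.finite_Iio N).image _)
  obtain ⟨b, hbB⟩ := hBne
  obtain ⟨p, hp, hpB⟩ := htail.exists_mem_open hB ⟨b, hbB⟩
  obtain ⟨⟨n, rfl⟩, hnot⟩ := hp
  refine ⟨f^[n] q, hpB, n, fun x => ?_⟩
  have hnN : N ≤ n := by
    by_contra h
    exact hnot ⟨n, lt_of_not_ge h, rfl⟩
  obtain ⟨m, hmS, hxm⟩ := Set.mem_iUnion₂.mp (hS (Set.mem_univ x))
  have hmN : m ≤ N := Finset.le_sup (f := id) hmS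
  refine ⟨n - m, Nat.le_sub_of_add_le ?_ |>.trans (Nat.sub_le n m) |>.trans le_rfl, f^[m] q,
    ?_, Metric.mem_ball.mp hxm⟩
  · omega
  · rw [← Function.iterate_add_apply]
    congr 1
    omega
end

section
/- Let (X, 𝒜, ν) be a finite measure space, Θ : X → X a measure-preserving map, s : X → [0, ∞) a ν-integrable function, R : X → [0, ∞) a measurable function, and η, ζ > 0. Suppose that for ν-almost every x ∈ X there is r₀(x) ∈ ℕ such that for all integers r ≥ r₀(x): ζ·Σ_{i=0}^{r−1} R(Θ^i x) ≤ η·r + Σ_{i=0}^{r−1} s(Θ^i x). Then R is ν-integrable, and ∫ R dν ≤ (η·ν(X) + ∫ s dν)/ζ. -/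
open MeasureTheory Filter Set
open scoped ENNReal Topology

private lemma ofReal_sum_le' {ι : Type*} (t : Finset ι) (f : ι → ℝ) :
    ENNReal.ofReal (∑ i ∈ t, f i) ≤ ∑ i ∈ t, ENNReal.ofReal (f i) := by
  classical
  induction t using Finset.induction with
  | empty => simp
  | insert _ _ hx ih =>
    rw [Finset.sum_insert hx, Finset.sum_insert hx]
    exact le_trans ENNReal.ofReal_add_le (add_le_add_right ih _)

/-- If along `ν`-a.e. orbit of a measure-preserving map `Θ` the Birkhoff
sums of `R` are eventually dominated via `ζ·Σ R∘Θ^i ≤ η·r + Σ s∘Θ^i` with `s`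
integrable, then `R` is `ν`-integrable and `∫ R dν ≤ (η·ν(X) + ∫ s dν)/ζ`. -/
theorem integrable_return_time_of_orbitwise_bound
    {X : Type*} [MeasurableSpace X] (ν : Measure X) [IsFiniteMeasure ν]
    (Θ : X → X) (hΘ : MeasurePreserving Θ ν ν)
    (s : X → ℝ) (hs0 : ∀ x, 0 ≤ s x) (hsint : Integrable s ν)
    (R : X → ℝ) (hR0 : ∀ x, 0 ≤ R x) (hRmeas : Measurable R)
    (η ζ : ℝ) (hη : 0 < η) (hζ : 0 < ζ)
    (hyp : ∀ᵐ x ∂ν, ∃ r₀ : ℕ, ∀ r : ℕ, r₀ ≤ r →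
      ζ * ∑ i ∈ Finset.range r, R (Θ^[i] x) ≤ η * r + ∑ i ∈ Finset.range r, s (Θ^[i] x)) :
    Integrable R ν ∧ ∫ x, R x ∂ν ≤ (η * (ν Set.univ).toReal + ∫ x, s x ∂ν) / ζ := by
  classical
  -- measurable modification of s
  set s' : X → ℝ := hsint.aestronglyMeasurable.mk s with hs'def
  have hs'm : Measurable s' := hsint.aestronglyMeasurable.stronglyMeasurable_mk.measurable
  have hss' : s =ᵐ[ν] s' := hsint.aestronglyMeasurable.ae_eq_mk
  -- iterates measure preserving / measurable
  have hΘi : ∀ i : ℕ, MeasurePreserving (Θ^[i]) ν ν := fun i => hΘ.iterate i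
  have hsum_meas : ∀ (f : X → ℝ), Measurable f → ∀ r : ℕ,
      Measurable fun x => ∑ i ∈ Finset.range r, f (Θ^[i] x) := fun f hf r =>
    Finset.measurable_sum _ fun i _ => hf.comp (hΘi i).measurable
  -- good sets
  set A : ℕ → Set X := fun N => {x | ∀ r : ℕ, N ≤ r →
    ζ * ∑ i ∈ Finset.range r, R (Θ^[i] x) ≤ η * r + ∑ i ∈ Finset.range r, s' (Θ^[i] x)}
    with hAdef
  have hAmeas : ∀ N, MeasurableSet (A N) := by
    intro N
    have : A N = ⋂ r ∈ {r : ℕ | N ≤ r}, {x | ζ * ∑ i ∈ Finset.range r, R (Θ^[i] x)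
        ≤ η * r + ∑ i ∈ Finset.range r, s' (Θ^[i] x)} := by
      ext x; simp [hAdef, Set.mem_iInter]
    rw [this]
    refine MeasurableSet.biInter (Set.to_countable _) fun r _ => measurableSet_le ?_ ?_
    · exact (measurable_const.mul (hsum_meas R hRmeas r))
    · exact (measurable_const.add (hsum_meas s' hs'm r))
  have hAmono : Monotone A := by
    intro N N' hNN' x hx r hr
    exact hx r (le_trans hNN' hr)
  -- a.e. every point is in some A N
  have haei : ∀ i : ℕ, (fun x => s (Θ^[i] x)) =ᵐ[ν] fun x => s' (Θ^[i] x) := by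
    intro i
    have := ae_eq_comp (f := Θ^[i]) (hΘi i).measurable.aemeasurable
      (g := s) (g' := s') (by rw [(hΘi i).map_eq]; exact hss')
    exact this
  have hae : ∀ᵐ x ∂ν, ∃ N, x ∈ A N := by
    filter_upwards [hyp, ae_all_iff.2 haei] with x hx hx'
    obtain ⟨r₀, hr₀⟩ := hx
    refine ⟨r₀, fun r hr => ?_⟩
    have : ∑ i ∈ Finset.range r, s (Θ^[i] x) = ∑ i ∈ Finset.range r, s' (Θ^[i] x) :=
      Finset.sum_congr rfl fun i _ => hx' i
    rw [← this]; exact hr₀ r hr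
  -- measure of complements tends to 0
  have hcompl0 : ν (⋂ N, (A N)ᶜ) = 0 := by
    rw [← Set.compl_iUnion]
    have h0 : ∀ᵐ x ∂ν, x ∈ ⋃ N, A N := by
      filter_upwards [hae] with x hx
      obtain ⟨N, hN⟩ := hx; exact Set.mem_iUnion.2 ⟨N, hN⟩
    rw [ae_iff] at h0
    convert h0 using 2
    rfl
  have hT : Tendsto (fun N => ν ((A N)ᶜ)) atTop (𝓝 0) := by
    have := tendsto_measure_iInter_atTop (μ := ν) (s := fun N => (A N)ᶜ)
      (fun N => (hAmeas N).compl.nullMeasurableSet)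
      (fun N N' h => Set.compl_subset_compl.2 (hAmono h))
      ⟨0, measure_ne_top ν _⟩
    rw [hcompl0] at this
    exact this
  -- key quantities
  set gM : ℕ → X → ℝ≥0∞ := fun M x => ENNReal.ofReal (min (R x) M) with hgMdef
  have hgMmeas : ∀ M, Measurable (gM M) := fun M =>
    (hRmeas.min measurable_const).ennreal_ofReal
  set J : ℝ≥0∞ := ∫⁻ x, ENNReal.ofReal (s' x) ∂ν with hJdef
  have hJeq : J = ∫⁻ x, ENNReal.ofReal (s x) ∂ν := by
    rw [hJdef]
    exact (lintegral_congr_ae (hss'.fun_comp ENNReal.ofReal)).symm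
  have hJfin : J ≠ ∞ := by
    rw [hJeq]
    have hfin := hsint.hasFiniteIntegral
    rw [hasFiniteIntegral_iff_norm] at hfin
    have heq : (∫⁻ x, ENNReal.ofReal (s x) ∂ν) = ∫⁻ x, ENNReal.ofReal ‖s x‖ ∂ν :=
      lintegral_congr fun x => by rw [Real.norm_of_nonneg (hs0 x)]
    rw [heq]; exact hfin.ne
  set C : ℝ≥0∞ := ENNReal.ofReal η * ν Set.univ + J with hCdef
  have hCfin : C ≠ ∞ := by
    rw [hCdef]
    exact ENNReal.add_ne_top.2 ⟨ENNReal.mul_ne_top ENNReal.ofReal_ne_top (measure_ne_top ν _), hJfin⟩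
  have hζ' : (ENNReal.ofReal ζ) ≠ 0 := by simp [hζ, hζ.not_ge]
  have hζtop : (ENNReal.ofReal ζ) ≠ ∞ := ENNReal.ofReal_ne_top
  -- key inequality for fixed M, N
  have key : ∀ M N : ℕ, ENNReal.ofReal ζ * ∫⁻ x, gM M x ∂ν
      ≤ C + ENNReal.ofReal ζ * ((M : ℝ≥0∞) * ν ((A N)ᶜ)) := by
    intro M N
    set r : ℕ := max N 1 with hrdef
    have hrN : N ≤ r := le_max_left _ _
    have hr0 : (r : ℝ≥0∞) ≠ 0 := by
      simp [hrdef]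
    have hrtop : (r : ℝ≥0∞) ≠ ∞ := ENNReal.natCast_ne_top r
    -- lintegral of the Birkhoff sum of gM
    have hsumint : (∫⁻ x, ∑ i ∈ Finset.range r, gM M (Θ^[i] x) ∂ν)
        = (r : ℝ≥0∞) * ∫⁻ x, gM M x ∂ν := by
      rw [lintegral_finset_sum (Finset.range r) (f := fun i x => gM M (Θ^[i] x)) (fun i _ => (hgMmeas M).comp (hΘi i).measurable)]
      have : ∀ i ∈ Finset.range r, (∫⁻ x, gM M (Θ^[i] x) ∂ν) = ∫⁻ x, gM M x ∂ν :=
        fun i _ => (hΘi i).lintegral_comp (hgMmeas M)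
      rw [Finset.sum_congr rfl this, Finset.sum_const, Finset.card_range, nsmul_eq_mul]
    -- on A N: pointwise bound
    have hptwise : ∀ x ∈ A N, ENNReal.ofReal ζ * ∑ i ∈ Finset.range r, gM M (Θ^[i] x)
        ≤ ENNReal.ofReal (η * r) + ∑ i ∈ Finset.range r, ENNReal.ofReal (s' (Θ^[i] x)) := by
      intro x hx
      have h1 : ∑ i ∈ Finset.range r, gM M (Θ^[i] x)
          = ENNReal.ofReal (∑ i ∈ Finset.range r, min (R (Θ^[i] x)) M) :=
        (ENNReal.ofReal_sum_of_nonneg fun i _ => le_min (hR0 _) (Nat.cast_nonneg M)).symm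
      rw [h1, ← ENNReal.ofReal_mul hζ.le]
      have h2 : ζ * ∑ i ∈ Finset.range r, min (R (Θ^[i] x)) M
          ≤ η * r + ∑ i ∈ Finset.range r, s' (Θ^[i] x) := by
        have hmin : ∑ i ∈ Finset.range r, min (R (Θ^[i] x)) M
            ≤ ∑ i ∈ Finset.range r, R (Θ^[i] x) :=
          Finset.sum_le_sum fun i _ => min_le_left _ _
        calc ζ * ∑ i ∈ Finset.range r, min (R (Θ^[i] x)) M
            ≤ ζ * ∑ i ∈ Finset.range r, R (Θ^[i] x) := by
              exact mul_le_mul_of_nonneg_left hmin hζ.le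
          _ ≤ η * r + ∑ i ∈ Finset.range r, s' (Θ^[i] x) := hx r hrN
      calc ENNReal.ofReal (ζ * ∑ i ∈ Finset.range r, min (R (Θ^[i] x)) M)
          ≤ ENNReal.ofReal (η * r + ∑ i ∈ Finset.range r, s' (Θ^[i] x)) :=
            ENNReal.ofReal_le_ofReal h2
        _ ≤ ENNReal.ofReal (η * r) + ENNReal.ofReal (∑ i ∈ Finset.range r, s' (Θ^[i] x)) :=
            ENNReal.ofReal_add_le
        _ ≤ ENNReal.ofReal (η * r) + ∑ i ∈ Finset.range r, ENNReal.ofReal (s' (Θ^[i] x)) :=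
            add_le_add_right (ofReal_sum_le' _ _) _
    -- integrate the pointwise bound over A N, then over X
    have hA_int : ENNReal.ofReal ζ * ∫⁻ x in A N, ∑ i ∈ Finset.range r, gM M (Θ^[i] x) ∂ν
        ≤ ENNReal.ofReal (η * r) * ν Set.univ + (r : ℝ≥0∞) * J := by
      rw [← lintegral_const_mul' _ _ hζtop]
      calc (∫⁻ x in A N, ENNReal.ofReal ζ * ∑ i ∈ Finset.range r, gM M (Θ^[i] x) ∂ν)
          ≤ ∫⁻ x in A N, (ENNReal.ofReal (η * r)
              + ∑ i ∈ Finset.range r, ENNReal.ofReal (s' (Θ^[i] x))) ∂ν := by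
            refine setLIntegral_mono ?_ hptwise
            exact measurable_const.add
              (Finset.measurable_sum _ fun i _ =>
                (hs'm.comp (hΘi i).measurable).ennreal_ofReal)
        _ ≤ ∫⁻ x, (ENNReal.ofReal (η * r)
              + ∑ i ∈ Finset.range r, ENNReal.ofReal (s' (Θ^[i] x))) ∂ν :=
            setLIntegral_le_lintegral _ _
        _ = ENNReal.ofReal (η * r) * ν Set.univ + (r : ℝ≥0∞) * J := by
            rw [lintegral_add_left measurable_const, lintegral_const,
              lintegral_finset_sum (Finset.range r) (f := fun i x => ENNReal.ofReal (s' (Θ^[i] x))) (fun i _ =>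
                (hs'm.comp (hΘi i).measurable).ennreal_ofReal)]
            congr 1
            have : ∀ i ∈ Finset.range r, (∫⁻ x, ENNReal.ofReal (s' (Θ^[i] x)) ∂ν) = J :=
              fun i _ => (hΘi i).lintegral_comp hs'm.ennreal_ofReal
            rw [Finset.sum_congr rfl this, Finset.sum_const, Finset.card_range, nsmul_eq_mul]
    -- complement bound
    have hAc_int : (∫⁻ x in (A N)ᶜ, ∑ i ∈ Finset.range r, gM M (Θ^[i] x) ∂ν)
        ≤ (r : ℝ≥0∞) * ((M : ℝ≥0∞) * ν ((A N)ᶜ)) := by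
      have hpt : ∀ x ∈ (A N)ᶜ, ∑ i ∈ Finset.range r, gM M (Θ^[i] x)
          ≤ ((r : ℝ≥0∞) * (M : ℝ≥0∞)) := by
        intro x _
        calc ∑ i ∈ Finset.range r, gM M (Θ^[i] x)
            ≤ ∑ _i ∈ Finset.range r, (M : ℝ≥0∞) := by
              refine Finset.sum_le_sum fun i _ => ?_
              rw [hgMdef]
              calc ENNReal.ofReal (min (R (Θ^[i] x)) M)
                  ≤ ENNReal.ofReal (M : ℝ) := ENNReal.ofReal_le_ofReal (min_le_right _ _)
                _ = (M : ℝ≥0∞) := ENNReal.ofReal_natCast M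
          _ = (r : ℝ≥0∞) * (M : ℝ≥0∞) := by
              rw [Finset.sum_const, Finset.card_range, nsmul_eq_mul]
      calc (∫⁻ x in (A N)ᶜ, ∑ i ∈ Finset.range r, gM M (Θ^[i] x) ∂ν)
          ≤ ∫⁻ _x in (A N)ᶜ, ((r : ℝ≥0∞) * (M : ℝ≥0∞)) ∂ν :=
            setLIntegral_mono measurable_const hpt
        _ = (r : ℝ≥0∞) * (M : ℝ≥0∞) * ν ((A N)ᶜ) := setLIntegral_const _ _
        _ = (r : ℝ≥0∞) * ((M : ℝ≥0∞) * ν ((A N)ᶜ)) := by ring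
    -- assemble
    have hmain : (r : ℝ≥0∞) * (ENNReal.ofReal ζ * ∫⁻ x, gM M x ∂ν)
        ≤ (r : ℝ≥0∞) * (C + ENNReal.ofReal ζ * ((M : ℝ≥0∞) * ν ((A N)ᶜ))) := by
      have hsplit : (∫⁻ x, ∑ i ∈ Finset.range r, gM M (Θ^[i] x) ∂ν)
          = (∫⁻ x in A N, ∑ i ∈ Finset.range r, gM M (Θ^[i] x) ∂ν)
            + ∫⁻ x in (A N)ᶜ, ∑ i ∈ Finset.range r, gM M (Θ^[i] x) ∂ν :=
        (lintegral_add_compl _ (hAmeas N)).symm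
      have hηr : ENNReal.ofReal (η * r) = (r : ℝ≥0∞) * ENNReal.ofReal η := by
        rw [ENNReal.ofReal_mul hη.le, ENNReal.ofReal_natCast, mul_comm]
      calc (r : ℝ≥0∞) * (ENNReal.ofReal ζ * ∫⁻ x, gM M x ∂ν)
          = ENNReal.ofReal ζ * ((r : ℝ≥0∞) * ∫⁻ x, gM M x ∂ν) := by ring
        _ = ENNReal.ofReal ζ * ∫⁻ x, ∑ i ∈ Finset.range r, gM M (Θ^[i] x) ∂ν := by
            rw [hsumint]
        _ = ENNReal.ofReal ζ * (∫⁻ x in A N, ∑ i ∈ Finset.range r, gM M (Θ^[i] x) ∂ν)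
            + ENNReal.ofReal ζ * ∫⁻ x in (A N)ᶜ, ∑ i ∈ Finset.range r, gM M (Θ^[i] x) ∂ν := by
            rw [hsplit, mul_add]
        _ ≤ (ENNReal.ofReal (η * r) * ν Set.univ + (r : ℝ≥0∞) * J)
            + ENNReal.ofReal ζ * ((r : ℝ≥0∞) * ((M : ℝ≥0∞) * ν ((A N)ᶜ))) :=
            add_le_add hA_int (mul_le_mul_right hAc_int _)
        _ = (r : ℝ≥0∞) * (C + ENNReal.ofReal ζ * ((M : ℝ≥0∞) * ν ((A N)ᶜ))) := by
            rw [hηr, hCdef]; ring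
    exact (ENNReal.mul_le_mul_iff_right hr0 hrtop).mp hmain
  -- let N → ∞
  have key2 : ∀ M : ℕ, ENNReal.ofReal ζ * ∫⁻ x, gM M x ∂ν ≤ C := by
    intro M
    have hTM : Tendsto (fun N => C + ENNReal.ofReal ζ * ((M : ℝ≥0∞) * ν ((A N)ᶜ)))
        atTop (𝓝 C) := by
      have h1 : Tendsto (fun N => (M : ℝ≥0∞) * ν ((A N)ᶜ)) atTop (𝓝 0) := by
        have := ENNReal.Tendsto.const_mul (a := (M : ℝ≥0∞)) hT
          (Or.inr (ENNReal.natCast_ne_top M))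
        simpa using this
      have h2 : Tendsto (fun N => ENNReal.ofReal ζ * ((M : ℝ≥0∞) * ν ((A N)ᶜ)))
          atTop (𝓝 0) := by
        have := ENNReal.Tendsto.const_mul (a := ENNReal.ofReal ζ) h1 (Or.inr hζtop)
        simpa using this
      have := h2.const_add C
      simpa using this
    exact ge_of_tendsto' hTM fun N => key M N
  -- let M → ∞ : ∫⁻ ofReal R = ⨆ M, ∫⁻ gM M
  set Ig : ℝ≥0∞ := ∫⁻ x, ENNReal.ofReal (R x) ∂ν with hIgdef
  have hIg_sup : Ig = ⨆ M : ℕ, ∫⁻ x, gM M x ∂ν := by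
    rw [hIgdef, ← lintegral_iSup (fun M => hgMmeas M)
      (fun M M' h x => ENNReal.ofReal_le_ofReal (le_min (min_le_left _ _)
        (le_trans (min_le_right _ _) (Nat.cast_le.2 h))))]
    refine lintegral_congr fun x => ?_
    refine le_antisymm ?_ ?_
    · refine le_iSup_of_le ⌈R x⌉₊ ?_
      rw [hgMdef]
      simp only []
      rw [min_eq_left (Nat.le_ceil (R x))]
    · exact iSup_le fun M => ENNReal.ofReal_le_ofReal (min_le_left _ _)
  have hfinal : ENNReal.ofReal ζ * Ig ≤ C := by
    rw [hIg_sup, ENNReal.mul_iSup]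
    exact iSup_le key2
  -- finiteness of Ig
  have hIgfin : Ig ≠ ∞ := by
    intro h
    rw [h] at hfinal
    rw [ENNReal.mul_top hζ'] at hfinal
    exact hCfin (top_le_iff.mp hfinal)
  -- integrability of R
  have hRint : Integrable R ν := by
    refine ⟨hRmeas.aestronglyMeasurable, ?_⟩
    rw [hasFiniteIntegral_iff_norm]
    have : (∫⁻ x, ENNReal.ofReal ‖R x‖ ∂ν) = Ig := by
      rw [hIgdef]
      exact lintegral_congr fun x => by rw [Real.norm_of_nonneg (hR0 x)]
    rw [this]
    exact lt_top_iff_ne_top.2 hIgfin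
  refine ⟨hRint, ?_⟩
  -- convert to real inequality
  have hIR : ∫ x, R x ∂ν = Ig.toReal := by
    rw [integral_eq_lintegral_of_nonneg_ae (ae_of_all _ hR0) hRmeas.aestronglyMeasurable,
      hIgdef]
  have hIs : ∫ x, s x ∂ν = J.toReal := by
    rw [integral_eq_lintegral_of_nonneg_ae (ae_of_all _ hs0) hsint.aestronglyMeasurable,
      hJeq]
  have htoReal : ζ * Ig.toReal ≤ η * (ν Set.univ).toReal + J.toReal := by
    have := ENNReal.toReal_mono hCfin hfinal
    rw [ENNReal.toReal_mul, ENNReal.toReal_ofReal hζ.le] at this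
    rw [hCdef, ENNReal.toReal_add
      (ENNReal.mul_ne_top ENNReal.ofReal_ne_top (measure_ne_top ν _)) hJfin,
      ENNReal.toReal_mul, ENNReal.toReal_ofReal hη.le] at this
    exact this
  rw [hIR, hIs, le_div_iff₀ hζ]
  linarith
end

section
/- In the tower setting, assume there is a constant K₁ < ∞ such that for P-almost every ω the measure ν_ω is absolutely continuous with respect to m with density dν_ω/dm ≤ K₁, and assume that for P-almost every ω and every measurable B ⊆ Δ one has ν_ω(B) = Σ_{n=1}^{∞} ν_{σ^{−n}ω}({x ∈ Δ : R(σ^{−n}ω, x) = n and F(σ^{−n}ω, x) ∈ B}). Then the measure ν on Ω × Δ defined by ν(A) = ∫_Ω ν_ω({x : (ω, x) ∈ A}) dP(ω) is a finite measure with ν(Ω × Δ) ≤ K₁·m(Δ), ν is absolutely continuous with respect to the product measure P ⊗ m, and ν is Θ-invariant: Θ_*ν = ν. -/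
open MeasureTheory ProbabilityTheory Filter Set
open scoped ENNReal NNReal

/-- In the tower setting, if the kernel `κ` (the family `ν_ω`) has densities
bounded by `K₁` with respect to `m` and is a fixed point of the induced transfer operator,
then the measure `ν = P ⊗ₘ κ` on `Ω × Δ` is finite with mass at most `K₁·m(Δ)`,
absolutely continuous w.r.t. `P ⊗ m`, and invariant under the tower map `Θ`. -/
theorem tower_measure_finite_ac_invariant
    {Ω Δ : Type*} [MeasurableSpace Ω] [MeasurableSpace Δ]
    (P : Measure Ω) [IsProbabilityMeasure P]
    (m : Measure Δ) [IsFiniteMeasure m]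
    (σ σinv : Ω → Ω) (hσ : Measurable σ) (hσinv : Measurable σinv)
    (hinv1 : ∀ ω, σinv (σ ω) = ω) (hinv2 : ∀ ω, σ (σinv ω) = ω)
    (hσP : MeasurePreserving σ P P)
    (R : Ω → Δ → ℕ) (hR : Measurable fun p : Ω × Δ => R p.1 p.2) (hR1 : ∀ ω x, 1 ≤ R ω x)
    (F : Ω → Δ → Δ) (hF : Measurable fun p : Ω × Δ => F p.1 p.2)
    (κ : Kernel Ω Δ) [IsFiniteKernel κ]
    (K₁ : ℝ≥0)
    (hdens : ∀ᵐ ω ∂P, κ ω ≤ (K₁ : ℝ≥0∞) • m)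
    (hfix : ∀ᵐ ω ∂P, ∀ B : Set Δ, MeasurableSet B →
      κ ω B = ∑' n : ℕ, κ (σinv^[n + 1] ω)
        {x | R (σinv^[n + 1] ω) x = n + 1 ∧ F (σinv^[n + 1] ω) x ∈ B}) :
    (P.compProd κ) Set.univ ≤ (K₁ : ℝ≥0∞) * m Set.univ ∧
    IsFiniteMeasure (P.compProd κ) ∧
    (P.compProd κ) ≪ P.prod m ∧
    Measure.map (fun p : Ω × Δ => (σ^[R p.1 p.2] p.1, F p.1 p.2)) (P.compProd κ) =
      P.compProd κ := by
  have hσiter : ∀ n : ℕ, Measurable (σ^[n] : Ω → Ω) := fun n => hσ.iterate n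
  have hσinviter : ∀ n : ℕ, Measurable (σinv^[n] : Ω → Ω) := fun n => hσinv.iterate n
  have hσinvP : MeasurePreserving σinv P P := by
    refine ⟨hσinv, ?_⟩
    conv_lhs => rw [← hσP.map_eq]
    rw [Measure.map_map hσinv hσ]
    have h1 : σinv ∘ σ = id := funext hinv1
    rw [h1, Measure.map_id]
  have hσinvIter : ∀ n : ℕ, MeasurePreserving (σinv^[n]) P P := fun n => hσinvP.iterate n
  have hinv2' : ∀ n : ℕ, ∀ ω, σ^[n] (σinv^[n] ω) = ω := by
    intro n
    induction n with
    | zero => intro ω; rfl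
    | succ k ih =>
      intro ω
      rw [Function.iterate_succ_apply' σinv, Function.iterate_succ_apply σ, hinv2, ih]
  -- mass bound
  have hmass : (P.compProd κ) Set.univ ≤ (K₁ : ℝ≥0∞) * m Set.univ := by
    rw [Measure.compProd_apply MeasurableSet.univ]
    calc ∫⁻ ω, κ ω (Prod.mk ω ⁻¹' (Set.univ : Set (Ω × Δ))) ∂P
        ≤ ∫⁻ _, (K₁ : ℝ≥0∞) * m Set.univ ∂P := by
          refine lintegral_mono_ae ?_
          filter_upwards [hdens] with ω hω
          have := hω Set.univ
          simpa using this
      _ = (K₁ : ℝ≥0∞) * m Set.univ := by simp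
  refine ⟨hmass, inferInstance, ?_, ?_⟩
  · -- absolute continuity
    refine Measure.AbsolutelyContinuous.mk fun s hs h0 => ?_
    rw [Measure.prod_apply hs] at h0
    have hae : ∀ᵐ ω ∂P, m (Prod.mk ω ⁻¹' s) = 0 :=
      (lintegral_eq_zero_iff (measurable_measure_prodMk_left hs)).mp h0
    rw [Measure.compProd_apply hs]
    refine lintegral_eq_zero_iff' ((Kernel.measurable_kernel_prodMk_left hs).aemeasurable) |>.mpr ?_
    filter_upwards [hdens, hae] with ω h1 h2
    have := h1 (Prod.mk ω ⁻¹' s)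
    simp only [Measure.smul_apply, smul_eq_mul] at this
    exact le_antisymm (by simpa [h2] using this) (zero_le)
  · -- invariance
    have hΘmeas : Measurable (fun p : Ω × Δ => (σ^[R p.1 p.2] p.1, F p.1 p.2)) := by
      refine Measurable.prod ?_ hF
      have : (fun p : Ω × Δ => σ^[R p.1 p.2] p.1) =
          (fun q : Ω × ℕ => σ^[q.2] q.1) ∘ (fun p : Ω × Δ => (p.1, R p.1 p.2)) := rfl
      rw [this]
      exact (measurable_from_prod_countable_left fun n => hσiter n).comp
        (measurable_fst.prodMk hR)
    refine Measure.ext fun s hs => ?_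
    rw [Measure.map_apply hΘmeas hs, Measure.compProd_apply (hΘmeas hs),
      Measure.compProd_apply hs]
    set t : ℕ → Set (Ω × Δ) :=
      fun n => {p : Ω × Δ | R p.1 p.2 = n + 1 ∧ (σ^[n + 1] p.1, F p.1 p.2) ∈ s} with ht_def
    have ht : ∀ n, MeasurableSet (t n) := by
      intro n
      exact (hR (MeasurableSet.singleton (n + 1))).inter
        (((( hσiter (n+1)).comp measurable_fst).prodMk hF) hs)
    set u : ℕ → Set (Ω × Δ) :=
      fun n => {p : Ω × Δ | R (σinv^[n + 1] p.1) p.2 = n + 1 ∧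
        (p.1, F (σinv^[n + 1] p.1) p.2) ∈ s} with hu_def
    have hu : ∀ n, MeasurableSet (u n) := by
      intro n
      have hRm : Measurable fun p : Ω × Δ => R (σinv^[n+1] p.1) p.2 :=
        hR.comp (((hσinviter (n+1)).comp measurable_fst).prodMk measurable_snd)
      have hFm : Measurable fun p : Ω × Δ => F (σinv^[n+1] p.1) p.2 :=
        hF.comp (((hσinviter (n+1)).comp measurable_fst).prodMk measurable_snd)
      exact (hRm (MeasurableSet.singleton (n + 1))).inter
        ((measurable_fst.prodMk hFm) hs)
    have hslice : ∀ ω, κ ω (Prod.mk ω ⁻¹'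
        ((fun p : Ω × Δ => (σ^[R p.1 p.2] p.1, F p.1 p.2)) ⁻¹' s)) =
        ∑' n, κ ω (Prod.mk ω ⁻¹' t n) := by
      intro ω
      have hset : Prod.mk ω ⁻¹'
          ((fun p : Ω × Δ => (σ^[R p.1 p.2] p.1, F p.1 p.2)) ⁻¹' s) =
          ⋃ n, Prod.mk ω ⁻¹' t n := by
        ext x
        simp only [mem_preimage, mem_iUnion, ht_def, mem_setOf_eq]
        constructor
        · intro h
          obtain ⟨n, hn⟩ : ∃ n, R ω x = n + 1 :=
            ⟨R ω x - 1, (Nat.succ_pred_eq_of_pos (hR1 ω x)).symm⟩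
          exact ⟨n, hn, by rwa [← hn]⟩
        · rintro ⟨n, h1, h2⟩
          rwa [h1]
      rw [hset]
      refine measure_iUnion ?_ (fun n => measurable_prodMk_left (ht n))
      intro i j hij
      simp only [Function.onFun, disjoint_left]
      rintro x ⟨h1, -⟩ ⟨h2, -⟩
      exact hij (by omega)
    calc ∫⁻ ω, κ ω (Prod.mk ω ⁻¹'
          ((fun p : Ω × Δ => (σ^[R p.1 p.2] p.1, F p.1 p.2)) ⁻¹' s)) ∂P
        = ∫⁻ ω, ∑' n, κ ω (Prod.mk ω ⁻¹' t n) ∂P := lintegral_congr hslice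
      _ = ∑' n, ∫⁻ ω, κ ω (Prod.mk ω ⁻¹' t n) ∂P :=
          lintegral_tsum fun n => (Kernel.measurable_kernel_prodMk_left (ht n)).aemeasurable
      _ = ∑' n, ∫⁻ ω, κ (σinv^[n+1] ω) (Prod.mk ω ⁻¹' u n) ∂P := by
          refine tsum_congr fun n => ?_
          rw [← (hσinvIter (n+1)).lintegral_comp (Kernel.measurable_kernel_prodMk_left (ht n))]
          refine lintegral_congr fun ω => ?_
          congr 1
          ext x
          simp only [mem_preimage, ht_def, hu_def, mem_setOf_eq, hinv2' (n+1) ω]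
      _ = ∫⁻ ω, ∑' n, κ (σinv^[n+1] ω) (Prod.mk ω ⁻¹' u n) ∂P := by
          refine (lintegral_tsum fun n => ?_).symm
          have : (fun ω => κ (σinv^[n+1] ω) (Prod.mk ω ⁻¹' u n)) =
              fun ω => (κ.comap (σinv^[n+1]) (hσinviter (n+1))) ω (Prod.mk ω ⁻¹' u n) := by
            funext ω; rw [Kernel.comap_apply]
          rw [this]
          exact (Kernel.measurable_kernel_prodMk_left (hu n)).aemeasurable
      _ = ∫⁻ ω, κ ω (Prod.mk ω ⁻¹' s) ∂P := by
          refine lintegral_congr_ae ?_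
          filter_upwards [hfix] with ω hω
          have := hω (Prod.mk ω ⁻¹' s) (measurable_prodMk_left hs)
          rw [this]
          rfl
end

section
/- In the random tower setting, assume that for P-almost every ω and every measurable B ⊆ Δ one has ν_ω(B) = Σ_{n=1}^{∞} ν_{σ^{−n}ω}({x ∈ Δ : R(σ^{−n}ω, x) = n and F(σ^{−n}ω, x) ∈ B}), where F(ω, x) = g_ω^{R(ω,x)}(x). For each ω define the measure μ_ω on M by μ_ω = Σ_{j=0}^{∞} (g_{σ^{−j}ω}^{j})_* ( ν_{σ^{−j}ω} restricted to {x ∈ Δ : R(σ^{−j}ω, x) > j} ). Then for P-almost every ω, (g_ω)_* μ_ω = μ_{σω}. -/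
open MeasureTheory Filter Set
open scoped ENNReal

/-- Random iterates: `randIter σ g n ω = g_{σ^{n-1}ω} ∘ ⋯ ∘ g_{σω} ∘ g_ω`. -/
def randIter {Ω M : Type*} (σ : Ω → Ω) (g : Ω → M → M) : ℕ → Ω → M → M
  | 0, _, x => x
  | n + 1, ω, x => g (σ^[n] ω) (randIter σ g n ω x)

/-- In the random tower setting, if the kernel `(ν_ω)` is a fixed point of
the induced transfer operator, then the projected measures
`μ_ω = Σ_j (g_{σ^{-j}ω}^j)_* (ν_{σ^{-j}ω}|{R > j})` are quasi-invariant: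
`(g_ω)_* μ_ω = μ_{σω}` for `P`-a.e. `ω`. -/
theorem projected_measures_quasi_invariant
    {Ω M : Type*} [MeasurableSpace Ω] [MeasurableSpace M]
    (P : Measure Ω) [IsProbabilityMeasure P]
    (σ σinv : Ω → Ω) (hσ : Measurable σ) (hσinv : Measurable σinv)
    (hinv1 : ∀ ω, σinv (σ ω) = ω) (hinv2 : ∀ ω, σ (σinv ω) = ω)
    (hσP : MeasurePreserving σ P P)
    (Δ : Set M) (hΔ : MeasurableSet Δ)
    (g : Ω → M → M) (hg : Measurable fun p : Ω × M => g p.1 p.2)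
    (R : Ω → M → ℕ) (hRmeas : Measurable fun p : Ω × M => R p.1 p.2)
    (hR1 : ∀ ω, ∀ x ∈ Δ, 1 ≤ R ω x)
    (hRΔ : ∀ ω, ∀ x ∈ Δ, randIter σ g (R ω x) ω x ∈ Δ)
    (ν : Ω → Measure M) (hνfin : ∀ ω, IsFiniteMeasure (ν ω))
    (hνΔ : ∀ ω, ν ω Δᶜ = 0)
    (hνmeas : ∀ B : Set M, MeasurableSet B → Measurable fun ω => ν ω B)
    (hfix : ∀ᵐ ω ∂P, ∀ B : Set M, MeasurableSet B → B ⊆ Δ →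
      ν ω B = ∑' n : ℕ, ν (σinv^[n + 1] ω)
        {x | x ∈ Δ ∧ R (σinv^[n + 1] ω) x = n + 1 ∧
          randIter σ g (R (σinv^[n + 1] ω) x) (σinv^[n + 1] ω) x ∈ B}) :
    ∀ᵐ ω ∂P,
      Measure.map (g ω)
        (Measure.sum fun j : ℕ =>
          Measure.map (randIter σ g j (σinv^[j] ω))
            ((ν (σinv^[j] ω)).restrict {x | x ∈ Δ ∧ j < R (σinv^[j] ω) x})) =
      Measure.sum fun j : ℕ =>
        Measure.map (randIter σ g j (σinv^[j] (σ ω)))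
          ((ν (σinv^[j] (σ ω))).restrict {x | x ∈ Δ ∧ j < R (σinv^[j] (σ ω)) x}) := by
  have hfix' := hσP.quasiMeasurePreserving.tendsto_ae.eventually hfix
  filter_upwards [hfix'] with ω hfixω
  have hgm : ∀ ω' : Ω, Measurable (g ω') := fun ω' => hg.comp measurable_prodMk_left
  have hRm : ∀ ω' : Ω, Measurable (R ω') := fun ω' => hRmeas.comp measurable_prodMk_left
  have hIm : ∀ (n : ℕ) (ω' : Ω), Measurable (randIter σ g n ω') := by
    intro n
    induction n with
    | zero => exact fun ω' => measurable_id
    | succ n ih => exact fun ω' => (hgm _).comp (ih ω')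
  have hsi : ∀ n : ℕ, σinv^[n + 1] (σ ω) = σinv^[n] ω := fun n => by
    rw [Function.iterate_succ_apply, hinv1]
  have hss : ∀ j : ℕ, σ^[j] (σinv^[j] ω) = ω := by
    intro j
    induction j with
    | zero => rfl
    | succ j ih =>
      rw [Function.iterate_succ_apply σ, Function.iterate_succ_apply' σinv, hinv2, ih]
  refine Measure.ext fun B hB => ?_
  rw [Measure.map_apply (hgm ω) hB, Measure.sum_apply _ ((hgm ω) hB), Measure.sum_apply _ hB]
  have hL : ∀ j : ℕ,
      (Measure.map (randIter σ g j (σinv^[j] ω))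
        ((ν (σinv^[j] ω)).restrict {x | x ∈ Δ ∧ j < R (σinv^[j] ω) x})) (g ω ⁻¹' B)
      = ν (σinv^[j] ω)
          {x | x ∈ Δ ∧ R (σinv^[j] ω) x = j + 1 ∧ randIter σ g (j + 1) (σinv^[j] ω) x ∈ B}
        + ν (σinv^[j] ω)
          {x | x ∈ Δ ∧ j + 1 < R (σinv^[j] ω) x ∧ randIter σ g (j + 1) (σinv^[j] ω) x ∈ B} := by
    intro j
    rw [Measure.map_apply (hIm j _) ((hgm ω) hB),
        Measure.restrict_apply ((hIm j _) ((hgm ω) hB))]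
    have hr : ∀ x, randIter σ g (j + 1) (σinv^[j] ω) x = g ω (randIter σ g j (σinv^[j] ω) x) := by
      intro x
      show g (σ^[j] (σinv^[j] ω)) _ = _
      rw [hss j]
    have hset : randIter σ g j (σinv^[j] ω) ⁻¹' (g ω ⁻¹' B) ∩ {x | x ∈ Δ ∧ j < R (σinv^[j] ω) x}
        = {x | x ∈ Δ ∧ R (σinv^[j] ω) x = j + 1 ∧ randIter σ g (j + 1) (σinv^[j] ω) x ∈ B}
        ∪ {x | x ∈ Δ ∧ j + 1 < R (σinv^[j] ω) x ∧ randIter σ g (j + 1) (σinv^[j] ω) x ∈ B} := by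
      ext x
      simp only [Set.mem_inter_iff, Set.mem_preimage, Set.mem_union, Set.mem_setOf_eq, hr x]
      constructor
      · rintro ⟨hgB, hxΔ, hlt⟩
        rcases Nat.lt_or_ge (j + 1) (R (σinv^[j] ω) x) with h | h
        · exact Or.inr ⟨hxΔ, h, hgB⟩
        · exact Or.inl ⟨hxΔ, le_antisymm h hlt, hgB⟩
      · rintro (⟨hxΔ, heq, hgB⟩ | ⟨hxΔ, hlt, hgB⟩)
        · exact ⟨hgB, hxΔ, by omega⟩
        · exact ⟨hgB, hxΔ, by omega⟩
    rw [hset]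
    refine measure_union ?_ ?_
    · rw [Set.disjoint_left]
      rintro x ⟨_, heq, _⟩ ⟨_, hlt, _⟩
      omega
    · exact hΔ.inter (((hRm _) measurableSet_Ioi).inter ((hIm _ _) hB))
  have ha : (∑' j : ℕ, ν (σinv^[j] ω)
      {x | x ∈ Δ ∧ R (σinv^[j] ω) x = j + 1 ∧ randIter σ g (j + 1) (σinv^[j] ω) x ∈ B})
      = ν (σ ω) (B ∩ Δ) := by
    rw [hfixω (B ∩ Δ) (hB.inter hΔ) Set.inter_subset_right]
    refine tsum_congr fun n => ?_
    rw [hsi n]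
    have hset : {x | x ∈ Δ ∧ R (σinv^[n] ω) x = n + 1 ∧
          randIter σ g (n + 1) (σinv^[n] ω) x ∈ B}
        = {x | x ∈ Δ ∧ R (σinv^[n] ω) x = n + 1 ∧
          randIter σ g (R (σinv^[n] ω) x) (σinv^[n] ω) x ∈ B ∩ Δ} := by
      ext x
      simp only [Set.mem_setOf_eq, Set.mem_inter_iff]
      constructor
      · rintro ⟨hxΔ, heq, hmB⟩
        refine ⟨hxΔ, heq, ?_, hRΔ _ x hxΔ⟩
        rw [heq]; exact hmB
      · rintro ⟨hxΔ, heq, hmB, _⟩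
        refine ⟨hxΔ, heq, ?_⟩
        rw [heq] at hmB; exact hmB
    rw [hset]
  have h0 : (Measure.map (randIter σ g 0 (σinv^[0] (σ ω)))
      ((ν (σinv^[0] (σ ω))).restrict {x | x ∈ Δ ∧ 0 < R (σinv^[0] (σ ω)) x})) B
      = ν (σ ω) (B ∩ Δ) := by
    rw [Measure.map_apply (hIm 0 _) hB, Measure.restrict_apply ((hIm 0 _) hB)]
    have hset : randIter σ g 0 (σinv^[0] (σ ω)) ⁻¹' B ∩
        {x | x ∈ Δ ∧ 0 < R (σinv^[0] (σ ω)) x} = B ∩ Δ := by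
      ext x
      show x ∈ B ∧ x ∈ Δ ∧ 0 < R (σ ω) x ↔ x ∈ B ∧ x ∈ Δ
      constructor
      · rintro ⟨hmB, hxΔ, _⟩; exact ⟨hmB, hxΔ⟩
      · rintro ⟨hmB, hxΔ⟩; exact ⟨hmB, hxΔ, hR1 _ x hxΔ⟩
    rw [hset]
    rfl
  have hb : ∀ j : ℕ, (Measure.map (randIter σ g (j + 1) (σinv^[j + 1] (σ ω)))
        ((ν (σinv^[j + 1] (σ ω))).restrict
          {x | x ∈ Δ ∧ j + 1 < R (σinv^[j + 1] (σ ω)) x})) B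
      = ν (σinv^[j] ω)
          {x | x ∈ Δ ∧ j + 1 < R (σinv^[j] ω) x ∧ randIter σ g (j + 1) (σinv^[j] ω) x ∈ B} := by
    intro j
    rw [hsi j, Measure.map_apply (hIm _ _) hB, Measure.restrict_apply ((hIm _ _) hB)]
    have hset : randIter σ g (j + 1) (σinv^[j] ω) ⁻¹' B ∩
          {x | x ∈ Δ ∧ j + 1 < R (σinv^[j] ω) x}
        = {x | x ∈ Δ ∧ j + 1 < R (σinv^[j] ω) x ∧ randIter σ g (j + 1) (σinv^[j] ω) x ∈ B} := by
      ext x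
      simp only [Set.mem_inter_iff, Set.mem_preimage, Set.mem_setOf_eq]
      tauto
    rw [hset]
  calc (∑' j : ℕ, (Measure.map (randIter σ g j (σinv^[j] ω))
          ((ν (σinv^[j] ω)).restrict {x | x ∈ Δ ∧ j < R (σinv^[j] ω) x})) (g ω ⁻¹' B))
      = (∑' j : ℕ, ν (σinv^[j] ω)
          {x | x ∈ Δ ∧ R (σinv^[j] ω) x = j + 1 ∧ randIter σ g (j + 1) (σinv^[j] ω) x ∈ B})
        + ∑' j : ℕ, ν (σinv^[j] ω)
          {x | x ∈ Δ ∧ j + 1 < R (σinv^[j] ω) x ∧ randIter σ g (j + 1) (σinv^[j] ω) x ∈ B} := by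
        rw [← ENNReal.tsum_add]; exact tsum_congr hL
    _ = ν (σ ω) (B ∩ Δ) + ∑' j : ℕ, (Measure.map (randIter σ g (j + 1) (σinv^[j + 1] (σ ω)))
          ((ν (σinv^[j + 1] (σ ω))).restrict
            {x | x ∈ Δ ∧ j + 1 < R (σinv^[j + 1] (σ ω)) x})) B := by
        rw [ha]; exact congrArg _ (tsum_congr hb).symm
    _ = _ := by
        rw [← h0]
        exact (tsum_eq_zero_add' (f := fun i : ℕ => (Measure.map (randIter σ g i (σinv^[i] (σ ω)))
          ((ν (σinv^[i] (σ ω))).restrict {x | x ∈ Δ ∧ i < R (σinv^[i] (σ ω)) x})) B)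
          ENNReal.summable).symm
end

section
/- Let (T, 𝒯, θ) be a probability space, M a measurable space, and f : T × M → M measurable. Let Ω = T^ℤ carry the product measure P = θ^ℤ and the two-sided shift σ defined by (σω)_i = ω_{i+1}. Let ω ↦ μ_ω be a kernel of finite measures on M (ω ↦ μ_ω(B) measurable for each measurable B ⊆ M) such that: (1) ω ↦ μ_ω is measurable with respect to the sub-σ-algebra of Ω generated by the coordinates ω_i with i < 0; (2) ∫_Ω μ_ω(M) dP(ω) < ∞; and (3) for P-almost every ω, (f(ω_0, ·))_* μ_ω = μ_{σω}. Then the measure μ on M defined by μ(B) = ∫_Ω μ_ω(B) dP(ω) satisfies: the pushforward of θ ⊗ μ under the map (t, x) ↦ f(t, x) equals μ; in particular, after normalization μ is a stationary measure for the random system (f, θ). -/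
open MeasureTheory Filter Set
open scoped ENNReal

section StationaryAux

open MeasurableSpace

variable {ι X : Type*} [MeasurableSpace X]

/-- Finite-dimensional "boxes" (cylinder sets with product base) in a function space. -/
def statBoxes (ι X : Type*) [MeasurableSpace X] : Set (Set (ι → X)) :=
  {S | ∃ (s : Finset ι) (B : ι → Set X), (∀ i, MeasurableSet (B i)) ∧
    S = {x | ∀ i ∈ s, x i ∈ B i}}

lemma statBoxes_univ_mem : (univ : Set (ι → X)) ∈ statBoxes ι X :=
  ⟨∅, fun _ => univ, fun _ => MeasurableSet.univ, by simp⟩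

lemma measurableSet_statBox (s : Finset ι) (B : ι → Set X)
    (hB : ∀ i, MeasurableSet (B i)) : MeasurableSet {x : ι → X | ∀ i ∈ s, x i ∈ B i} := by
  have h : {x : ι → X | ∀ i ∈ s, x i ∈ B i} = ⋂ i ∈ s, (fun x : ι → X => x i) ⁻¹' B i := by
    ext x; simp
  rw [h]
  exact MeasurableSet.biInter s.countable_toSet fun i _ => measurable_pi_apply i (hB i)

lemma isPiSystem_statBoxes : IsPiSystem (statBoxes ι X) := by
  classical
  rintro S ⟨s, B, hB, rfl⟩ S' ⟨t, C, hC, rfl⟩ -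
  refine ⟨s ∪ t, fun i => (if i ∈ s then B i else univ) ∩ (if i ∈ t then C i else univ),
    fun i => ?_, ?_⟩
  · exact (by split_ifs with h; exacts [hB i, MeasurableSet.univ] :
      MeasurableSet (if i ∈ s then B i else univ)).inter
      (by split_ifs with h; exacts [hC i, MeasurableSet.univ])
  · ext x
    simp only [mem_inter_iff, mem_setOf_eq]
    constructor
    · rintro ⟨h1, h2⟩ i hi
      constructor
      · split_ifs with h; exacts [h1 i h, mem_univ _]
      · split_ifs with h; exacts [h2 i h, mem_univ _]
    · intro h
      constructor
      · intro i hi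
        have h' := (h i (Finset.mem_union_left _ hi)).1
        rwa [if_pos hi] at h'
      · intro i hi
        have h' := (h i (Finset.mem_union_right _ hi)).2
        rwa [if_pos hi] at h'

lemma generateFrom_statBoxes :
    generateFrom (statBoxes ι X) = (MeasurableSpace.pi : MeasurableSpace (ι → X)) := by
  apply le_antisymm
  · refine generateFrom_le ?_
    rintro S ⟨s, B, hB, rfl⟩
    exact measurableSet_statBox s B hB
  · refine iSup_le fun i => ?_
    intro S hS
    rw [measurableSet_comap] at hS
    obtain ⟨A, hA, rfl⟩ := hS
    exact measurableSet_generateFrom ⟨{i}, fun _ => A, fun _ => hA, by ext x; simp⟩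

lemma isCountablySpanning_statBoxes : IsCountablySpanning (statBoxes ι X) :=
  ⟨fun _ => univ, fun _ => statBoxes_univ_mem, iUnion_const _⟩

/-- A `comap`-measurable (into `ℝ≥0∞`) function is constant on fibers. -/
lemma eq_of_comap_measurable {α β : Type*} {mβ : MeasurableSpace β} {g : α → β}
    {F : α → ℝ≥0∞} (hF : Measurable[MeasurableSpace.comap g mβ] F)
    {a a' : α} (h : g a = g a') : F a = F a' := by
  obtain ⟨S, hS, hEq⟩ := hF (measurableSet_singleton (F a'))
  have ha' : a' ∈ g ⁻¹' S := by rw [hEq]; exact rfl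
  have ha : a ∈ g ⁻¹' S := by simpa only [mem_preimage, h] using ha'
  have ha2 : a ∈ F ⁻¹' {F a'} := by rw [← hEq]; exact ha
  exact ha2

/-- Restriction of a two-sided sequence to its negative coordinates. -/
def statRestr {T : Type*} (ω : ℤ → T) : {i : ℤ // i < 0} → T := fun i => ω i.1

/-- Extension of a negative-coordinates configuration to a two-sided sequence. -/
noncomputable def statExt {T : Type*} [Nonempty T] (y : {i : ℤ // i < 0} → T) : ℤ → T :=
  fun i => if h : i < 0 then y ⟨i, h⟩ else Classical.arbitrary T

lemma statRestr_statExt {T : Type*} [Nonempty T] (y : {i : ℤ // i < 0} → T) :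
    statRestr (statExt y) = y := by
  funext i
  simp only [statRestr, statExt, dif_pos i.2, Subtype.coe_eta]

lemma measurable_statRestr {T : Type*} [MeasurableSpace T] :
    Measurable (statRestr (T := T)) :=
  measurable_pi_lambda _ fun i => measurable_pi_apply i.1

lemma measurable_statExt {T : Type*} [MeasurableSpace T] [Nonempty T] :
    Measurable (statExt (T := T)) := by
  refine measurable_pi_lambda _ fun i => ?_
  by_cases h : i < 0
  · simpa only [statExt, dif_pos h] using measurable_pi_apply (⟨i, h⟩ : {i : ℤ // i < 0})
  · simpa only [statExt, dif_neg h] using measurable_const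

end StationaryAux

/-- If `(μ_ω)` is a past-measurable family of finite measures with finite
total mass which is quasi-invariant, `(f_{ω₀})_* μ_ω = μ_{σω}`, over the two-sided
Bernoulli shift `(T^ℤ, θ^ℤ)`, then the averaged measure `μ = ∫ μ_ω dP(ω)` (here
`P.bind μ`) is stationary for `(f, θ)`: the pushforward of `θ ⊗ μ` under
`(t, x) ↦ f t x` equals `μ`. Here the product measure `P = θ^ℤ` is characterized by
its values on cylinder sets. -/
theorem stationary_of_past_measurable_quasi_invariant_family
    {T M : Type*} [MeasurableSpace T] [MeasurableSpace M]
    (θ : Measure T) [IsProbabilityMeasure θ]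
    (f : T → M → M) (hf : Measurable (Function.uncurry f))
    (P : Measure (ℤ → T)) [IsProbabilityMeasure P]
    (hP : ∀ (s : Finset ℤ) (B : ℤ → Set T), (∀ i, MeasurableSet (B i)) →
      P {ω | ∀ i ∈ s, ω i ∈ B i} = ∏ i ∈ s, θ (B i))
    (μ : (ℤ → T) → Measure M) (hμfin : ∀ ω, IsFiniteMeasure (μ ω))
    (hpast : ∀ B : Set M, MeasurableSet B →
      Measurable[MeasurableSpace.comap
        (fun (ω : ℤ → T) (i : {i : ℤ // i < 0}) => ω i.1) MeasurableSpace.pi]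
        (fun ω => μ ω B))
    (hfin : ∫⁻ ω, μ ω Set.univ ∂P < ⊤)
    (hquasi : ∀ᵐ ω ∂P, Measure.map (f (ω 0)) (μ ω) = μ (fun i => ω (i + 1))) :
    Measure.map (fun p : T × M => f p.1 p.2) (θ.prod (P.bind μ)) = P.bind μ := by
  classical
  haveI hT : Nonempty T := by
    by_contra h
    rw [not_nonempty_iff] at h
    have h1 := measure_univ (μ := θ)
    rw [Set.univ_eq_empty_iff.mpr h, measure_empty] at h1
    exact zero_ne_one h1
  -- basic measurability facts
  have hrm : Measurable (statRestr (T := T)) := measurable_statRestr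
  have hem : Measurable (statExt (T := T)) := measurable_statExt
  have hrle : MeasurableSpace.comap
      (fun (ω : ℤ → T) (i : {i : ℤ // i < 0}) => ω i.1) MeasurableSpace.pi ≤
      (MeasurableSpace.pi : MeasurableSpace (ℤ → T)) := hrm.comap_le
  have hμm : Measurable μ :=
    Measure.measurable_of_measurable_coe μ fun s hs => ((hpast s hs).mono hrle le_rfl)
  have hνB : ∀ s : Set M, MeasurableSet s → (P.bind μ) s = ∫⁻ ω, μ ω s ∂P :=
    fun s hs => Measure.bind_apply hs hμm.aemeasurable
  haveI hν : IsFiniteMeasure (P.bind μ) := by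
    constructor
    rw [hνB univ MeasurableSet.univ]
    exact hfin
  -- the family is constant on fibers of the restriction to the past
  have hconst : ∀ (s : Set M), MeasurableSet s → ∀ ω ω' : ℤ → T,
      statRestr ω = statRestr ω' → μ ω s = μ ω' s := fun s hs ω ω' h =>
    eq_of_comap_measurable (hpast s hs) h
  -- shift invariance of P
  have hσm : Measurable (fun ω : ℤ → T => fun i => ω (i + 1)) :=
    measurable_pi_lambda _ fun i => measurable_pi_apply (i + 1)
  have hshift : Measure.map (fun ω : ℤ → T => fun i => ω (i + 1)) P = P := by
    haveI := Measure.isProbabilityMeasure_map (μ := P) hσm.aemeasurable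
    refine ext_of_generate_finite (statBoxes ℤ T) generateFrom_statBoxes.symm
      isPiSystem_statBoxes ?_ (by simp)
    rintro S ⟨s, B, hB, rfl⟩
    rw [Measure.map_apply hσm (measurableSet_statBox s B hB)]
    have hpre : (fun ω : ℤ → T => fun i => ω (i + 1)) ⁻¹' {x : ℤ → T | ∀ i ∈ s, x i ∈ B i}
        = {ω : ℤ → T | ∀ j ∈ s.map ⟨fun i => i + 1, add_left_injective 1⟩, ω j ∈ B (j - 1)} := by
      ext ω
      simp only [mem_preimage, mem_setOf_eq, Finset.mem_map, Function.Embedding.coeFn_mk]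
      constructor
      · rintro h j ⟨i, hi, rfl⟩
        simpa using h i hi
      · intro h i hi
        simpa using h (i + 1) ⟨i, hi, rfl⟩
    rw [hpre, hP _ _ fun j => hB (j - 1), hP s B hB, Finset.prod_map]
    simp
  -- the law of (ω 0, past of ω) is θ ⊗ (law of past)
  have hΨm : Measurable (fun ω : ℤ → T => (ω 0, statRestr ω)) :=
    (measurable_pi_apply 0).prodMk hrm
  haveI hQprob : IsProbabilityMeasure (Measure.map (statRestr (T := T)) P) :=
    Measure.isProbabilityMeasure_map hrm.aemeasurable
  have hΨ : Measure.map (fun ω : ℤ → T => (ω 0, statRestr ω)) P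
      = θ.prod (Measure.map statRestr P) := by
    haveI := Measure.isProbabilityMeasure_map (μ := P) hΨm.aemeasurable
    refine ext_of_generate_finite
      (image2 (· ×ˢ ·) {A : Set T | MeasurableSet A} (statBoxes {i : ℤ // i < 0} T))
      ?_ ?_ ?_ (by simp)
    · exact (generateFrom_eq_prod MeasurableSpace.generateFrom_measurableSet
        generateFrom_statBoxes isCountablySpanning_measurableSet
        isCountablySpanning_statBoxes).symm
    · exact IsPiSystem.prod MeasurableSpace.isPiSystem_measurableSet isPiSystem_statBoxes
    rintro _ ⟨A, hA, _, ⟨s, B, hB, rfl⟩, rfl⟩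
    set B' : ℤ → Set T := fun j =>
      if h : j < 0 then (if (⟨j, h⟩ : {i : ℤ // i < 0}) ∈ s then B ⟨j, h⟩ else univ)
      else (if j = 0 then A else univ) with hB'def
    have hB' : ∀ j, MeasurableSet (B' j) := by
      intro j
      simp only [hB'def]
      split_ifs
      exacts [hB _, MeasurableSet.univ, hA, MeasurableSet.univ]
    have hB'0 : B' 0 = A := by
      simp only [hB'def]
      norm_num
    have h0nm : (0 : ℤ) ∉ s.map ⟨Subtype.val, Subtype.val_injective⟩ := by
      intro hmem
      obtain ⟨i, _, h0⟩ := Finset.mem_map.mp hmem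
      simp only [Function.Embedding.coeFn_mk] at h0
      have hi2 := i.2
      rw [h0] at hi2
      exact absurd hi2 (lt_irrefl (0 : ℤ))
    have hbox2 : statRestr ⁻¹' {y : {i : ℤ // i < 0} → T | ∀ i ∈ s, y i ∈ B i}
        = {ω : ℤ → T | ∀ j ∈ s.map ⟨Subtype.val, Subtype.val_injective⟩, ω j ∈ B' j} := by
      ext ω
      simp only [mem_preimage, mem_setOf_eq, Finset.mem_map, Function.Embedding.coeFn_mk,
        statRestr]
      constructor
      · rintro h j ⟨i, hi, rfl⟩
        simp only [hB'def]
        rw [dif_pos i.2, Subtype.coe_eta, if_pos hi]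
        exact h i hi
      · intro h i hi
        have h' := h i.1 ⟨i, hi, rfl⟩
        simp only [hB'def] at h'
        rwa [dif_pos i.2, Subtype.coe_eta, if_pos hi] at h'
    have hbox1 : (fun ω : ℤ → T => (ω 0, statRestr ω)) ⁻¹'
          ((A : Set T) ×ˢ {y : {i : ℤ // i < 0} → T | ∀ i ∈ s, y i ∈ B i})
        = {ω : ℤ → T | ∀ j ∈ insert (0 : ℤ) (s.map ⟨Subtype.val, Subtype.val_injective⟩),
            ω j ∈ B' j} := by
      ext ω
      simp only [mem_preimage, mem_prod, mem_setOf_eq, Finset.mem_insert, Finset.mem_map,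
        Function.Embedding.coeFn_mk, statRestr]
      constructor
      · rintro ⟨h0, h⟩ j hj
        rcases hj with rfl | ⟨i, hi, rfl⟩
        · rw [hB'0]; exact h0
        · simp only [hB'def]
          rw [dif_pos i.2, Subtype.coe_eta, if_pos hi]
          exact h i hi
      · intro h
        constructor
        · have h' := h 0 (Or.inl rfl)
          rwa [hB'0] at h'
        · intro i hi
          have h' := h i.1 (Or.inr ⟨i, hi, rfl⟩)
          simp only [hB'def] at h'
          rwa [dif_pos i.2, Subtype.coe_eta, if_pos hi] at h'
    rw [Measure.map_apply hΨm (hA.prod (measurableSet_statBox s B hB)), hbox1,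
      hP _ _ hB', Measure.prod_prod,
      Measure.map_apply hrm (measurableSet_statBox s B hB), hbox2, hP _ _ hB',
      Finset.prod_insert h0nm, hB'0]
  -- now prove the statement set by set
  have hf' : Measurable (fun p : T × M => f p.1 p.2) := hf
  refine Measure.ext fun B hB => ?_
  have hfB : ∀ t, MeasurableSet {x | f t x ∈ B} := fun t =>
    (hf.comp measurable_prodMk_left) hB
  -- joint measurability of (t, y) ↦ μ (statExt y) {x | f t x ∈ B}
  set E : Set ((T × ({i : ℤ // i < 0} → T)) × M) := {q | f q.1.1 q.2 ∈ B} with hEdef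
  have hE : MeasurableSet E := (hf.comp ((measurable_fst.fst).prodMk measurable_snd)) hB
  have hκm : ∀ n : ℕ, Measurable (fun p : T × ({i : ℤ // i < 0} → T) =>
      if μ (statExt p.2) univ ≤ (n : ℝ≥0∞) then μ (statExt p.2) else 0) := by
    intro n
    refine Measure.measurable_of_measurable_coe _ fun s hs => ?_
    simp only [apply_ite (fun m : Measure M => m s), Measure.coe_zero, Pi.zero_apply]
    have hcond : MeasurableSet {p : T × ({i : ℤ // i < 0} → T) |
        μ (statExt p.2) univ ≤ (n : ℝ≥0∞)} :=
      measurableSet_le ((Measure.measurable_coe MeasurableSet.univ).comp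
        (hμm.comp (hem.comp measurable_snd))) measurable_const
    exact Measurable.ite hcond
      ((Measure.measurable_coe hs).comp (hμm.comp (hem.comp measurable_snd)))
      measurable_const
  let κ : ℕ → ProbabilityTheory.Kernel (T × ({i : ℤ // i < 0} → T)) M := fun n =>
    ⟨fun p => if μ (statExt p.2) univ ≤ (n : ℝ≥0∞) then μ (statExt p.2) else 0, hκm n⟩
  haveI hκfin : ∀ n, ProbabilityTheory.IsFiniteKernel (κ n) := fun n =>
    ⟨⟨n, ENNReal.natCast_lt_top n, fun p => by
      show (if μ (statExt p.2) univ ≤ (n : ℝ≥0∞) then μ (statExt p.2) else 0) univ ≤ (n : ℝ≥0∞)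
      split_ifs with h
      · exact h
      · simp⟩⟩
  have hH : Measurable (fun p : T × ({i : ℤ // i < 0} → T) =>
      μ (statExt p.2) {x | f p.1 x ∈ B}) := by
    have hsup : (fun p : T × ({i : ℤ // i < 0} → T) => μ (statExt p.2) {x | f p.1 x ∈ B})
        = fun p => ⨆ n : ℕ, κ n p (Prod.mk p ⁻¹' E) := by
      funext p
      have hpre : Prod.mk p ⁻¹' E = {x | f p.1 x ∈ B} := rfl
      have hmass : μ (statExt p.2) univ ≠ ⊤ := (hμfin _).measure_univ_lt_top.ne
      obtain ⟨n, hn⟩ := ENNReal.exists_nat_gt hmass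
      refine le_antisymm ?_ ?_
      · refine le_iSup_of_le n ?_
        have h' : κ n p (Prod.mk p ⁻¹' E) = μ (statExt p.2) {x | f p.1 x ∈ B} := by
          rw [hpre]
          show (if μ (statExt p.2) univ ≤ (n : ℝ≥0∞) then μ (statExt p.2) else 0) _ = _
          rw [if_pos hn.le]
        exact h'.ge
      · refine iSup_le fun m => ?_
        rw [hpre]
        show (if μ (statExt p.2) univ ≤ (m : ℝ≥0∞) then μ (statExt p.2) else 0) _ ≤ _
        split_ifs with h
        · exact le_rfl
        · simp
    rw [hsup]
    exact Measurable.iSup fun n => ProbabilityTheory.Kernel.measurable_kernel_prodMk_left hE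
  -- the chain of equalities
  rw [Measure.map_apply hf' hB]
  calc (θ.prod (P.bind μ)) ((fun p : T × M => f p.1 p.2) ⁻¹' B)
      = ∫⁻ t, (P.bind μ) {x | f t x ∈ B} ∂θ := by
        rw [Measure.prod_apply (hf' hB)]
        exact lintegral_congr fun t => rfl
    _ = ∫⁻ t, ∫⁻ y, μ (statExt y) {x | f t x ∈ B} ∂(Measure.map statRestr P) ∂θ := by
        refine lintegral_congr fun t => ?_
        rw [hνB _ (hfB t),
          lintegral_map (show Measurable fun y : {i : ℤ // i < 0} → T =>
            μ (statExt y) {x | f t x ∈ B} from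
            (Measure.measurable_coe (hfB t)).comp (hμm.comp hem)) hrm]
        exact lintegral_congr fun ω => hconst _ (hfB t) ω _ (statRestr_statExt (statRestr ω)).symm
    _ = ∫⁻ p, μ (statExt p.2) {x | f p.1 x ∈ B} ∂(θ.prod (Measure.map statRestr P)) :=
        (lintegral_prod _ hH.aemeasurable).symm
    _ = ∫⁻ p, μ (statExt p.2) {x | f p.1 x ∈ B}
          ∂(Measure.map (fun ω : ℤ → T => (ω 0, statRestr ω)) P) := by rw [hΨ]
    _ = ∫⁻ ω, μ (statExt (statRestr ω)) {x | f (ω 0) x ∈ B} ∂P := lintegral_map hH hΨm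
    _ = ∫⁻ ω, μ ω {x | f (ω 0) x ∈ B} ∂P :=
        lintegral_congr fun ω =>
          (hconst _ (hfB (ω 0)) ω _ (statRestr_statExt (statRestr ω)).symm).symm
    _ = ∫⁻ ω, (Measure.map (f (ω 0)) (μ ω)) B ∂P :=
        lintegral_congr fun ω =>
          (Measure.map_apply (hf.comp measurable_prodMk_left) hB).symm
    _ = ∫⁻ ω, μ (fun i => ω (i + 1)) B ∂P :=
        lintegral_congr_ae (hquasi.mono fun ω h => congrArg (fun m : Measure M => m B) h)
    _ = ∫⁻ ω, μ ω B ∂(Measure.map (fun ω : ℤ → T => fun i => ω (i + 1)) P) :=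
        (lintegral_map (show Measurable fun ω : ℤ → T => μ ω B from
          (Measure.measurable_coe hB).comp hμm) hσm).symm
    _ = ∫⁻ ω, μ ω B ∂P := by rw [hshift]
    _ = (P.bind μ) B := (hνB B hB).symm
end

section
/- Let (Ω, 𝒢, P) be a probability space with a measurable bijection σ : Ω → Ω whose inverse is measurable and which preserves P (σ_*P = P), let (Δ, ℬ) be a measurable space, let ω ↦ ν_ω be a kernel of finite measures on Δ (ω ↦ ν_ω(B) measurable for each measurable B ⊆ Δ), let R : Ω × Δ → ℕ be measurable, and let ν be the measure on Ω × Δ defined by ν(A) = ∫_Ω ν_ω({x : (ω, x) ∈ A}) dP(ω). Then ∫_Ω Σ_{n=0}^{∞} ν_{σ^{−n}ω}({x ∈ Δ : R(σ^{−n}ω, x) > n}) dP(ω) = ∫_{Ω×Δ} R dν. In particular, the left-hand side is finite if and only if R is ν-integrable. -/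
open MeasureTheory ProbabilityTheory Filter Set
open scoped ENNReal

lemma aux_tsum_nat_cast (m : ℕ) :
    ∑' n : ℕ, (Set.indicator {k : ℕ | k < m} (fun _ => (1:ℝ≥0∞)) n) = m := by
  have h0 : ∀ n ∉ Finset.range m,
      Set.indicator {k : ℕ | k < m} (fun _ => (1:ℝ≥0∞)) n = 0 := by
    intro n hn
    simp only [Finset.mem_range, not_lt] at hn
    simp [Set.indicator_apply, Nat.not_lt.mpr hn]
  rw [tsum_eq_sum h0]
  have : ∀ n ∈ Finset.range m,
      Set.indicator {k : ℕ | k < m} (fun _ => (1:ℝ≥0∞)) n = 1 := by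
    intro n hn
    simp only [Finset.mem_range] at hn
    simp [Set.indicator_apply, hn]
  rw [Finset.sum_congr rfl this]
  simp

lemma aux_lintegral_nat {α : Type*} [MeasurableSpace α] (μ : Measure α) (f : α → ℕ)
    (hf : Measurable f) :
    ∫⁻ x, (f x : ℝ≥0∞) ∂μ = ∑' n : ℕ, μ {x | n < f x} := by
  have h1 : ∀ x, (f x : ℝ≥0∞) = ∑' n : ℕ, Set.indicator {x | n < f x} (fun _ => (1:ℝ≥0∞)) x := by
    intro x
    rw [show (∑' n : ℕ, Set.indicator {x | n < f x} (fun _ => (1:ℝ≥0∞)) x)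
        = ∑' n : ℕ, Set.indicator {k : ℕ | k < f x} (fun _ => (1:ℝ≥0∞)) n from
      tsum_congr fun n => by simp [Set.indicator_apply]]
    exact (aux_tsum_nat_cast (f x)).symm
  have hmeas : ∀ n : ℕ, MeasurableSet {x | n < f x} := fun n => hf measurableSet_Ioi
  simp_rw [h1]
  rw [lintegral_tsum (f := fun n x => Set.indicator {x | n < f x} (fun _ => (1:ℝ≥0∞)) x)
    fun n => (measurable_one.indicator (hmeas n)).aemeasurable]
  exact tsum_congr fun n => by
    exact lintegral_indicator_one (hmeas n)

/-- The total mass of the projected measure equals the integral of the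
return time against the lifted measure:
`∫ Σ_{n≥0} ν_{σ^{-n}ω}({R_{σ^{-n}ω} > n}) dP(ω) = ∫ R d(P ⊗ₘ κ)`. -/
theorem total_mass_projection_eq_integral_return_time
    {Ω Δ : Type*} [MeasurableSpace Ω] [MeasurableSpace Δ]
    (P : Measure Ω) [IsProbabilityMeasure P]
    (σ σinv : Ω → Ω) (hσ : Measurable σ) (hσinv : Measurable σinv)
    (hinv1 : ∀ ω, σinv (σ ω) = ω) (hinv2 : ∀ ω, σ (σinv ω) = ω)
    (hσP : MeasurePreserving σ P P)
    (κ : Kernel Ω Δ) [IsFiniteKernel κ]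
    (R : Ω → Δ → ℕ) (hR : Measurable fun p : Ω × Δ => R p.1 p.2) :
    ∫⁻ ω, ∑' n : ℕ, κ (σinv^[n] ω) {x | n < R (σinv^[n] ω) x} ∂P =
      ∫⁻ p, (R p.1 p.2 : ℝ≥0∞) ∂(P.compProd κ) := by
  have hσinvP : MeasurePreserving σinv P P := by
    refine ⟨hσinv, ?_⟩
    ext A hA
    rw [Measure.map_apply hσinv hA]
    have hpre : σ ⁻¹' (σinv ⁻¹' A) = A := by ext ω; simp [hinv1]
    calc P (σinv ⁻¹' A) = (Measure.map σ P) (σinv ⁻¹' A) := by rw [hσP.map_eq]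
      _ = P (σ ⁻¹' (σinv ⁻¹' A)) := Measure.map_apply hσ (hσinv hA)
      _ = P A := by rw [hpre]
  have hiter : ∀ n : ℕ, MeasurePreserving (σinv^[n]) P P := fun n => hσinvP.iterate n
  have hSmeas : ∀ n : ℕ, MeasurableSet {p : Ω × Δ | n < R p.1 p.2} :=
    fun n => hR measurableSet_Ioi
  have hfmeas : ∀ n : ℕ, Measurable fun ω => κ ω {x | n < R ω x} := by
    intro n
    have := Kernel.measurable_kernel_prodMk_left (κ := κ) (hSmeas n)
    simpa using this
  rw [lintegral_tsum (f := fun n ω => κ (σinv^[n] ω) {x | n < R (σinv^[n] ω) x})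
    (fun n => ((hfmeas n).comp (hiter n).measurable).aemeasurable)]
  have hstep : ∀ n : ℕ,
      ∫⁻ ω, κ (σinv^[n] ω) {x | n < R (σinv^[n] ω) x} ∂P
        = ∫⁻ ω, κ ω {x | n < R ω x} ∂P := fun n =>
    (hiter n).lintegral_comp (hfmeas n)
  simp_rw [hstep]
  rw [← lintegral_tsum (f := fun n ω => κ ω {x | n < R ω x})
    (fun n => (hfmeas n).aemeasurable)]
  rw [Measure.lintegral_compProd (f := fun p : Ω × Δ => (R p.1 p.2 : ℝ≥0∞)) (measurable_from_top.comp hR)]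
  exact lintegral_congr fun ω => (aux_lintegral_nat (κ ω) (R ω)
    (hR.comp measurable_prodMk_left)).symm
end
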